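/- arXiv:2201.04232 — 4 statements merged into one kernel-verified Lean document; each statement's English description precedes it below -/
import Mathlib

section
/- Let μ and ν be probability measures on ℝ with finite second moment, μ atomless. Then the map T = Q_ν ∘ F_μ (the monotone rearrangement), where F_μ is the CDF of μ and Q_ν the quantile function of ν, pushes μ forward to ν and is an optimal transport map for the quadratic cost, i.e. W_2(μ,ν)² = ∫ (T(x) - x)² dμ(x). -/
open MeasureTheory ProbabilityTheory Filter

/-- Squared 2-Wasserstein distance, defined as the infimum of the quadratic
transport cost over all couplings. -/
noncomputable def W2sq {E : Type*} [NormedAddCommGroup E] [MeasurableSpace E]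
    (μ ν : Measure E) : ℝ :=
  sInf ((fun γ : Measure (E × E) => ∫ p, ‖p.1 - p.2‖ ^ 2 ∂γ) ''
    {γ | γ.map Prod.fst = μ ∧ γ.map Prod.snd = ν})

/-- Quantile (right-continuous inverse of the CDF) of a measure on ℝ. -/
noncomputable def quantile (μ : Measure ℝ) (t : ℝ) : ℝ :=
  sInf {x | t ≤ ProbabilityTheory.cdf μ x}

open Set Topology

section QuantileAux

variable {ν : Measure ℝ} [IsProbabilityMeasure ν]

lemma quantile_le_of_le_cdf {t a : ℝ} (ht : 0 < t) (h : t ≤ cdf ν a) :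
    quantile ν t ≤ a := by
  refine csInf_le ?_ h
  obtain ⟨b, hb⟩ : ∃ b, cdf ν b < t := ((tendsto_cdf_atBot ν).eventually_lt_const ht).exists
  exact ⟨b, fun x hx => le_of_not_gt fun hxb =>
    absurd (hx.trans ((monotone_cdf ν) hxb.le)) (not_le.mpr hb)⟩

lemma le_cdf_of_quantile_le {t a : ℝ} (ht : t < 1) (h : quantile ν t ≤ a) :
    t ≤ cdf ν a := by
  obtain ⟨c, hc⟩ : ∃ c, t ≤ cdf ν c := ((tendsto_cdf_atTop ν).eventually_const_le ht).exists
  have key : ∀ x, quantile ν t < x → t ≤ cdf ν x := by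
    intro x hx
    have hx' : sInf {y : ℝ | t ≤ cdf ν y} < x := hx
    obtain ⟨y, hy, hyx⟩ :=
      exists_lt_of_csInf_lt (s := {y : ℝ | t ≤ cdf ν y}) ⟨c, hc⟩ hx'
    exact hy.trans ((monotone_cdf ν) hyx.le)
  have hrc : Filter.Tendsto (cdf ν) (𝓝[>] a) (𝓝 (cdf ν a)) :=
    ((cdf ν).right_continuous a).mono_left (nhdsWithin_mono a Ioi_subset_Ici_self)
  exact ge_of_tendsto hrc (eventually_nhdsWithin_of_forall fun x hx =>
    key x (h.trans_lt hx))

lemma quantile_le_iff {t a : ℝ} (ht0 : 0 < t) (ht1 : t < 1) :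
    quantile ν t ≤ a ↔ t ≤ cdf ν a :=
  ⟨le_cdf_of_quantile_le ht1, quantile_le_of_le_cdf ht0⟩

lemma quantile_nonpos {t : ℝ} (ht : t ≤ 0) : quantile ν t = 0 := by
  have hset : {x | t ≤ cdf ν x} = univ :=
    eq_univ_of_forall fun x => ht.trans (cdf_nonneg ν x)
  rw [quantile, hset, csInf_of_not_bddBelow, Real.sInf_empty]
  rintro ⟨b, hb⟩
  exact absurd (hb (mem_univ (b - 1))) (by simp)

lemma quantile_gt_one {t : ℝ} (ht : 1 < t) : quantile ν t = 0 := by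
  have hset : {x | t ≤ cdf ν x} = (∅ : Set ℝ) := by
    ext x
    simp only [mem_setOf_eq, mem_empty_iff_false, iff_false, not_le]
    exact (cdf_le_one ν x).trans_lt ht
  rw [quantile, hset, Real.sInf_empty]

lemma quantile_mono_middle {t t' : ℝ} (ht0 : 0 < t) (ht1 : t' < 1) (htt : t ≤ t') :
    quantile ν t ≤ quantile ν t' := by
  obtain ⟨b, hb⟩ : ∃ b, cdf ν b < t := ((tendsto_cdf_atBot ν).eventually_lt_const ht0).exists
  obtain ⟨c, hc⟩ : ∃ c, t' ≤ cdf ν c := ((tendsto_cdf_atTop ν).eventually_const_le ht1).exists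
  refine csInf_le_csInf ?_ ⟨c, hc⟩ (fun x hx => le_trans htt hx)
  exact ⟨b, fun x hx => le_of_not_gt fun hxb =>
    absurd (hx.trans ((monotone_cdf ν) hxb.le)) (not_le.mpr hb)⟩

lemma measurable_quantile (ν : Measure ℝ) [IsProbabilityMeasure ν] :
    Measurable (quantile ν) := by
  apply measurable_of_Iic
  intro a
  have hset : quantile ν ⁻¹' Iic a =
      (Ioo (0:ℝ) 1 ∩ Iic (cdf ν a)) ∪ ((Iic 0 ∪ Ioi 1) ∩ {t : ℝ | (0:ℝ) ≤ a}) ∪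
        ({1} ∩ {t : ℝ | quantile ν 1 ≤ a}) := by
    ext t
    simp only [mem_preimage, mem_Iic, mem_union, mem_inter_iff, mem_Ioo, mem_setOf_eq,
      mem_singleton_iff, mem_Ioi]
    constructor
    · intro h
      rcases le_or_gt t 0 with h0 | h0
      · exact Or.inl (Or.inr ⟨Or.inl h0, by rwa [quantile_nonpos h0] at h⟩)
      rcases lt_trichotomy t 1 with h1 | h1 | h1
      · exact Or.inl (Or.inl ⟨⟨h0, h1⟩, le_cdf_of_quantile_le h1 h⟩)
      · exact Or.inr ⟨h1, h1 ▸ h⟩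
      · exact Or.inl (Or.inr ⟨Or.inr h1, by rwa [quantile_gt_one h1] at h⟩)
    · rintro ((⟨⟨h0, h1⟩, h⟩ | ⟨h01, ha⟩) | ⟨h1, h⟩)
      · exact quantile_le_of_le_cdf h0 h
      · rcases h01 with h0 | h1
        · rw [quantile_nonpos h0]; exact ha
        · rw [quantile_gt_one h1]; exact ha
      · rw [h1]; exact h
  rw [hset]
  exact (((measurableSet_Ioo.inter measurableSet_Iic).union
    ((measurableSet_Iic.union measurableSet_Ioi).inter (MeasurableSet.const _))).union
    ((measurableSet_singleton _).inter (MeasurableSet.const _)))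

end QuantileAux

section CdfAux

lemma measure_cdf_eq_one_null (μ : Measure ℝ) [IsProbabilityMeasure μ] [NullSingletonClass μ] :
    μ {x | cdf μ x = 1} = 0 := by
  set A := {x | cdf μ x = (1:ℝ)} with hA
  rcases eq_empty_or_nonempty A with hAe | ⟨x₀, hx₀⟩
  · simp [hAe]
  obtain ⟨b, hb⟩ : ∃ b, cdf μ b < 1 := ((tendsto_cdf_atBot μ).eventually_lt_const one_pos).exists
  have hbdd : BddBelow A := by
    refine ⟨b, fun x hx => le_of_not_gt fun hxb => ?_⟩
    have h2 : cdf μ x ≤ cdf μ b := (monotone_cdf μ) hxb.le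
    rw [hx] at h2
    exact absurd h2 (not_le.mpr hb)
  set a := sInf A with ha
  have hev : ∀ x, a < x → cdf μ x = 1 := by
    intro x hx
    obtain ⟨y, hy, hyx⟩ := exists_lt_of_csInf_lt ⟨x₀, hx₀⟩ hx
    exact le_antisymm (cdf_le_one μ x) (hy ▸ (monotone_cdf μ) hyx.le)
  have h1 : cdf μ a = 1 := by
    have hrc : Filter.Tendsto (cdf μ) (𝓝[>] a) (𝓝 (cdf μ a)) :=
      ((cdf μ).right_continuous a).mono_left (nhdsWithin_mono a Ioi_subset_Ici_self)
    have hconst : Filter.Tendsto (cdf μ) (𝓝[>] a) (𝓝 1) := by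
      refine Filter.Tendsto.congr' ?_ tendsto_const_nhds
      exact eventually_nhdsWithin_of_forall fun x hx => (hev x hx).symm
    exact tendsto_nhds_unique hrc hconst
  have hIoi : μ (Ioi a) = 0 := by
    have hIic : μ (Iic a) = 1 := by
      rw [← ofReal_cdf μ a, h1, ENNReal.ofReal_one]
    have hc := measure_compl (measurableSet_Iic (a := a)) (measure_ne_top μ _)
    rw [compl_Iic, hIic, measure_univ] at hc
    simpa using hc
  have hsub : A ⊆ Ici a := fun x hx => csInf_le hbdd hx
  refine measure_mono_null hsub ?_
  have hIci : (Ici a : Set ℝ) = {a} ∪ Ioi a := by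
    ext x
    simp only [mem_Ici, mem_union, mem_singleton_iff, mem_Ioi]
    constructor
    · intro h; rcases eq_or_lt_of_le h with h | h
      · exact Or.inl h.symm
      · exact Or.inr h
    · rintro (rfl | h)
      · exact le_refl _
      · exact h.le
  rw [hIci]
  refine le_antisymm ?_ zero_le
  calc μ ({a} ∪ Ioi a) ≤ μ {a} + μ (Ioi a) := measure_union_le _ _
  _ = 0 := by rw [measure_singleton, hIoi, add_zero]

lemma measure_cdf_eq_zero_null (μ : Measure ℝ) [IsProbabilityMeasure μ] [NullSingletonClass μ] :
    μ {x | cdf μ x = 0} = 0 := by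
  set A := {x | cdf μ x = (0:ℝ)} with hA
  rcases eq_empty_or_nonempty A with hAe | ⟨x₀, hx₀⟩
  · simp [hAe]
  obtain ⟨c, hc⟩ : ∃ c, 0 < cdf μ c := ((tendsto_cdf_atTop μ).eventually_const_lt one_pos).exists
  have hbdd : BddAbove A := by
    refine ⟨c, fun x hx => le_of_not_gt fun hxc => ?_⟩
    have h2 : cdf μ c ≤ cdf μ x := (monotone_cdf μ) hxc.le
    rw [hx] at h2
    exact absurd h2 (not_le.mpr hc)
  set b := sSup A with hb
  have hzero : ∀ x, x < b → μ (Iic x) = 0 := by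
    intro x hx
    obtain ⟨y, hy, hxy⟩ := exists_lt_of_lt_csSup ⟨x₀, hx₀⟩ hx
    have : cdf μ x = 0 :=
      le_antisymm (hy ▸ (monotone_cdf μ) hxy.le) (cdf_nonneg μ x)
    rw [← ofReal_cdf μ x, this, ENNReal.ofReal_zero]
  have hIio : μ (Iio b) = 0 := by
    have hcover : Iio b = ⋃ n : ℕ, Iic (b - 1/(n+1)) := by
      ext x
      simp only [mem_Iio, mem_iUnion, mem_Iic]
      constructor
      · intro h
        obtain ⟨n, hn⟩ := exists_nat_one_div_lt (show 0 < b - x by linarith)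
        exact ⟨n, by push_cast at hn ⊢; linarith⟩
      · rintro ⟨n, hn⟩
        have : (0:ℝ) < 1/(n+1) := by positivity
        linarith
    rw [hcover]
    refine measure_iUnion_null fun n => hzero _ ?_
    have : (0:ℝ) < 1/((n:ℝ)+1) := by positivity
    linarith
  have hsub : A ⊆ Iic b := fun x hx => le_csSup hbdd hx
  refine measure_mono_null hsub ?_
  have hIic : (Iic b : Set ℝ) = Iio b ∪ {b} := by
    ext x
    simp only [mem_Iic, mem_union, mem_singleton_iff, mem_Iio]
    constructor
    · intro h; rcases lt_or_eq_of_le h with h | h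
      · exact Or.inl h
      · exact Or.inr h
    · rintro (h | rfl)
      · exact h.le
      · exact le_refl _
  rw [hIic]
  refine le_antisymm ?_ zero_le
  calc μ (Iio b ∪ {b}) ≤ μ (Iio b) + μ {b} := measure_union_le _ _
  _ = 0 := by rw [measure_singleton, hIio, add_zero]

lemma measure_bad_null (μ : Measure ℝ) [IsProbabilityMeasure μ] [NullSingletonClass μ] :
    μ {x | ¬(0 < cdf μ x ∧ cdf μ x < 1)} = 0 := by
  have hsub : {x | ¬(0 < cdf μ x ∧ cdf μ x < 1)} ⊆
      {x | cdf μ x = 0} ∪ {x | cdf μ x = 1} := by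
    intro x hx
    simp only [mem_setOf_eq, not_and_or, not_lt] at hx
    rcases hx with h | h
    · exact Or.inl (le_antisymm h (cdf_nonneg μ x))
    · exact Or.inr (le_antisymm (cdf_le_one μ x) h)
  refine measure_mono_null hsub ?_
  refine le_antisymm ?_ zero_le
  calc μ _ ≤ μ {x | cdf μ x = 0} + μ {x | cdf μ x = 1} := measure_union_le _ _
  _ = 0 := by rw [measure_cdf_eq_zero_null, measure_cdf_eq_one_null, add_zero]

lemma ae_cdf_mem (μ : Measure ℝ) [IsProbabilityMeasure μ] [NullSingletonClass μ] :
    ∀ᵐ x ∂μ, 0 < cdf μ x ∧ cdf μ x < 1 := by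
  rw [ae_iff]
  exact measure_bad_null μ

lemma measure_cdf_le (μ : Measure ℝ) [IsProbabilityMeasure μ] [NullSingletonClass μ]
    {c : ℝ} (hc0 : 0 ≤ c) (hc1 : c ≤ 1) :
    μ {x | cdf μ x ≤ c} = ENNReal.ofReal c := by
  rcases eq_or_lt_of_le hc1 with rfl | hc1
  · have : {x | cdf μ x ≤ (1:ℝ)} = univ := eq_univ_of_forall fun x => cdf_le_one μ x
    rw [this, measure_univ, ENNReal.ofReal_one]
  set D := {x | cdf μ x ≤ c} with hD
  rcases eq_empty_or_nonempty D with hDe | ⟨x₀, hx₀⟩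
  · have hall : ∀ x, c < cdf μ x := by
      intro x
      by_contra h
      exact absurd (show x ∈ D from not_lt.mp h) (by rw [hDe]; exact notMem_empty x)
    have hc : c ≤ 0 :=
      ge_of_tendsto (tendsto_cdf_atBot μ) (Eventually.of_forall fun x => (hall x).le)
    rw [hDe, measure_empty, le_antisymm hc hc0, ENNReal.ofReal_zero]
  obtain ⟨u, hu⟩ : ∃ u, c < cdf μ u := ((tendsto_cdf_atTop μ).eventually_const_lt hc1).exists
  have hbdd : BddAbove D := by
    refine ⟨u, fun x hx => le_of_not_gt fun hux => ?_⟩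
    exact absurd ((monotone_cdf μ hux.le).trans hx) (not_le.mpr hu)
  set m := sSup D with hm
  have hsub1 : Iio m ⊆ D := by
    intro x hx
    obtain ⟨y, hy, hxy⟩ := exists_lt_of_lt_csSup ⟨x₀, hx₀⟩ hx
    exact le_trans ((monotone_cdf μ) hxy.le) hy
  have hsub2 : D ⊆ Iic m := fun x hx => le_csSup hbdd hx
  have hcm : c ≤ cdf μ m := by
    have h2 : ∀ x, m < x → c ≤ cdf μ x := by
      intro x hx
      by_contra h
      exact absurd hx (not_lt.mpr (le_csSup hbdd (not_le.mp h).le))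
    have hrc : Filter.Tendsto (cdf μ) (𝓝[>] m) (𝓝 (cdf μ m)) :=
      ((cdf μ).right_continuous m).mono_left (nhdsWithin_mono m Ioi_subset_Ici_self)
    exact ge_of_tendsto hrc (eventually_nhdsWithin_of_forall fun x hx => h2 x hx)
  have hIioIic : μ (Iio m) = μ (Iic m) := measure_congr (Iio_ae_eq_Iic (a := m))
  have hIio_le : μ (Iio m) ≤ ENNReal.ofReal c := by
    have hcover : Iio m = ⋃ n : ℕ, Iic (m - 1/(n+1)) := by
      ext x
      simp only [mem_Iio, mem_iUnion, mem_Iic]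
      constructor
      · intro h
        obtain ⟨n, hn⟩ := exists_nat_one_div_lt (show 0 < m - x by linarith)
        exact ⟨n, by push_cast at hn ⊢; linarith⟩
      · rintro ⟨n, hn⟩
        have : (0:ℝ) < 1/(n+1) := by positivity
        linarith
    rw [hcover]
    have hmono : Monotone fun n : ℕ => Iic (m - 1/(n+1)) := by
      intro i j hij
      apply Iic_subset_Iic.mpr
      have hij' : (i:ℝ) + 1 ≤ (j:ℝ) + 1 := by exact_mod_cast Nat.succ_le_succ hij
      have h1 : (0:ℝ) < (i:ℝ)+1 := by positivity
      have := one_div_le_one_div_of_le h1 hij'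
      linarith
    rw [hmono.directed_le.measure_iUnion]
    refine iSup_le fun n => ?_
    have hlt : m - 1/((n:ℝ)+1) < m := by
      have : (0:ℝ) < 1/((n:ℝ)+1) := by positivity
      linarith
    have hmem : (m - 1/((n:ℝ)+1)) ∈ D := hsub1 hlt
    rw [← ofReal_cdf μ]
    exact ENNReal.ofReal_le_ofReal hmem
  refine le_antisymm ?_ ?_
  · calc μ D ≤ μ (Iic m) := measure_mono hsub2
    _ = μ (Iio m) := hIioIic.symm
    _ ≤ ENNReal.ofReal c := hIio_le
  · calc ENNReal.ofReal c ≤ ENNReal.ofReal (cdf μ m) := ENNReal.ofReal_le_ofReal hcm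
    _ = μ (Iic m) := ofReal_cdf μ m
    _ = μ (Iio m) := hIioIic.symm
    _ ≤ μ D := measure_mono hsub1

end CdfAux

section Part1

lemma map_monotone_rearrangement (μ ν : Measure ℝ) [IsProbabilityMeasure μ]
    [IsProbabilityMeasure ν] [NullSingletonClass μ] :
    μ.map (fun x => quantile ν (cdf μ x)) = ν := by
  have hT : Measurable fun x => quantile ν (cdf μ x) :=
    (measurable_quantile ν).comp (monotone_cdf μ).measurable
  have : IsProbabilityMeasure (μ.map fun x => quantile ν (cdf μ x)) :=
    Measure.isProbabilityMeasure_map hT.aemeasurable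
  refine Measure.ext_of_Iic _ _ fun a => ?_
  rw [Measure.map_apply hT measurableSet_Iic]
  have hae : ((fun x => quantile ν (cdf μ x)) ⁻¹' Iic a) =ᵐ[μ] {x | cdf μ x ≤ cdf ν a} := by
    rw [Filter.eventuallyEq_set]
    filter_upwards [ae_cdf_mem μ] with x hx
    simpa using quantile_le_iff hx.1 hx.2
  rw [measure_congr hae, measure_cdf_le μ (cdf_nonneg ν a) (cdf_le_one ν a), ofReal_cdf ν a]

end Part1

section Hoeffding

/-- Auxiliary kernel: `ee x s = 1_{s < x} - 1_{s < 0}`, so that `∫ s, ee x s = x`. -/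
noncomputable def ee (x s : ℝ) : ℝ := (if s < x then 1 else 0) - (if s < 0 then 1 else 0)

lemma ee_eq (x s : ℝ) :
    ee x s = (Ico (0:ℝ) x).indicator (fun _ => (1:ℝ)) s
      - (Ico x 0).indicator (fun _ => (1:ℝ)) s := by
  simp only [ee, indicator_apply, mem_Ico]
  by_cases h1 : s < x <;> by_cases h2 : s < 0 <;>
    simp [h1, h2] <;> split_ifs <;> first | rfl | linarith | (push_neg at *; linarith) | simp

lemma indIco_int (a b : ℝ) :
    Integrable ((Ico a b).indicator fun _ => (1:ℝ)) (volume : Measure ℝ) := by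
  rw [integrable_indicator_iff measurableSet_Ico]
  exact (integrableOn_const_iff).mpr (Or.inr measure_Ico_lt_top)

lemma integrable_ee (x : ℝ) : Integrable (ee x) (volume : Measure ℝ) := by
  have h : ee x = fun s => (Ico (0:ℝ) x).indicator (fun _ => (1:ℝ)) s
      - (Ico x 0).indicator (fun _ => (1:ℝ)) s := funext (ee_eq x)
  rw [h]
  exact (indIco_int 0 x).sub (indIco_int x 0)

lemma integral_ee (x : ℝ) : ∫ s, ee x s = x := by
  simp only [ee_eq]
  rw [integral_sub (indIco_int 0 x) (indIco_int x 0),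
    integral_indicator_const (1:ℝ) measurableSet_Ico,
    integral_indicator_const (1:ℝ) measurableSet_Ico]
  simp only [measureReal_def, Real.volume_Ico, smul_eq_mul, mul_one]
  rcases le_or_gt 0 x with h | h
  · rw [ENNReal.toReal_ofReal (by linarith), ENNReal.ofReal_of_nonpos (by linarith)]
    simp
  · rw [ENNReal.ofReal_of_nonpos (by linarith), ENNReal.toReal_ofReal (by linarith)]
    simp

lemma abs_ee (x s : ℝ) :
    |ee x s| = (Ico (0:ℝ) x).indicator (fun _ => (1:ℝ)) s
      + (Ico x 0).indicator (fun _ => (1:ℝ)) s := by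
  rw [ee_eq]
  rcases le_or_gt 0 x with hx | hx
  · rw [Ico_eq_empty (not_lt.mpr hx), indicator_empty]
    simp only [Pi.zero_apply, sub_zero, add_zero]
    exact abs_of_nonneg (indicator_nonneg (fun _ _ => zero_le_one) s)
  · rw [Ico_eq_empty (not_lt.mpr hx.le), indicator_empty]
    simp only [Pi.zero_apply, zero_sub, zero_add, abs_neg]
    exact abs_of_nonneg (indicator_nonneg (fun _ _ => zero_le_one) s)

lemma integral_abs_ee (x : ℝ) : ∫ s, |ee x s| = |x| := by
  simp only [abs_ee]
  rw [integral_add (indIco_int 0 x) (indIco_int x 0),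
    integral_indicator_const (1:ℝ) measurableSet_Ico,
    integral_indicator_const (1:ℝ) measurableSet_Ico]
  simp only [measureReal_def, Real.volume_Ico, smul_eq_mul, mul_one]
  rcases le_or_gt 0 x with h | h
  · rw [ENNReal.toReal_ofReal (by linarith), ENNReal.ofReal_of_nonpos (by linarith),
      abs_of_nonneg h]
    simp
  · rw [ENNReal.ofReal_of_nonpos (by linarith), ENNReal.toReal_ofReal (by linarith),
      abs_of_neg h]
    simp

lemma measurable_ee_pair :
    Measurable (fun r : (ℝ × ℝ) × (ℝ × ℝ) => ee r.1.1 r.2.1 * ee r.1.2 r.2.2) := by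
  unfold ee
  refine Measurable.mul (Measurable.sub ?_ ?_) (Measurable.sub ?_ ?_) <;>
  · apply Measurable.ite _ measurable_const measurable_const
    first
    | exact measurableSet_lt (measurable_snd.fst) (measurable_fst.fst)
    | exact measurableSet_lt (measurable_snd.fst) measurable_const
    | exact measurableSet_lt (measurable_snd.snd) (measurable_fst.snd)
    | exact measurableSet_lt (measurable_snd.snd) measurable_const

lemma integrable_ee_prod (γ : Measure (ℝ × ℝ)) [IsProbabilityMeasure γ]
    (hint : Integrable (fun p : ℝ × ℝ => p.1 * p.2) γ) :
    Integrable (Function.uncurry fun (p q : ℝ × ℝ) => ee p.1 q.1 * ee p.2 q.2)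
      (γ.prod (volume : Measure (ℝ × ℝ))) := by
  have hmeas : AEStronglyMeasurable
      (Function.uncurry fun (p q : ℝ × ℝ) => ee p.1 q.1 * ee p.2 q.2)
      (γ.prod (volume : Measure (ℝ × ℝ))) :=
    measurable_ee_pair.aestronglyMeasurable
  refine (integrable_prod_iff hmeas).mpr ⟨?_, ?_⟩
  · refine Eventually.of_forall fun p => ?_
    have h := (integrable_ee p.1).mul_prod (integrable_ee p.2)
    rwa [← Measure.volume_eq_prod] at h
  · have heq : (fun p : ℝ × ℝ => ∫ q : ℝ × ℝ,
          ‖Function.uncurry (fun (p q : ℝ × ℝ) => ee p.1 q.1 * ee p.2 q.2) (p, q)‖ ∂volume)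
        = fun p : ℝ × ℝ => |p.1| * |p.2| := by
      funext p
      simp only [Function.uncurry_apply_pair]
      calc ∫ q : ℝ × ℝ, ‖ee p.1 q.1 * ee p.2 q.2‖ ∂volume
          = ∫ q : ℝ × ℝ, |ee p.1 q.1| * |ee p.2 q.2| ∂((volume : Measure ℝ).prod volume) := by
            rw [← Measure.volume_eq_prod]
            simp [Real.norm_eq_abs, abs_mul]
        _ = (∫ s, |ee p.1 s|) * (∫ t, |ee p.2 t|) :=
            integral_prod_mul (f := fun s => |ee p.1 s|) (g := fun t => |ee p.2 t|)
        _ = |p.1| * |p.2| := by rw [integral_abs_ee, integral_abs_ee]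
    rw [heq]
    have h := hint.abs
    simpa [abs_mul] using h

lemma integral_mul_eq (γ : Measure (ℝ × ℝ)) [IsProbabilityMeasure γ]
    (hint : Integrable (fun p : ℝ × ℝ => p.1 * p.2) γ) :
    ∫ p, p.1 * p.2 ∂γ = ∫ q : ℝ × ℝ, (∫ p, ee p.1 q.1 * ee p.2 q.2 ∂γ) ∂volume := by
  have h := integral_integral_swap (integrable_ee_prod γ hint)
  rw [← h]
  refine integral_congr_ae (Eventually.of_forall fun p => ?_)
  show p.1 * p.2 = ∫ q : ℝ × ℝ, ee p.1 q.1 * ee p.2 q.2 ∂((volume : Measure ℝ).prod volume)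
  rw [integral_prod_mul (f := ee p.1) (g := ee p.2), integral_ee, integral_ee]

lemma integrable_slice_integral (γ : Measure (ℝ × ℝ)) [IsProbabilityMeasure γ]
    (hint : Integrable (fun p : ℝ × ℝ => p.1 * p.2) γ) :
    Integrable (fun q : ℝ × ℝ => ∫ p, ee p.1 q.1 * ee p.2 q.2 ∂γ) (volume : Measure (ℝ × ℝ)) :=
  (integrable_ee_prod γ hint).integral_prod_right

lemma slice_eq (γ : Measure (ℝ × ℝ)) [IsProbabilityMeasure γ] (s t : ℝ) :
    ∫ p, ee p.1 s * ee p.2 t ∂γ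
      = (γ ({p : ℝ × ℝ | s < p.1} ∩ {p : ℝ × ℝ | t < p.2})).toReal
        - (if t < 0 then (1:ℝ) else 0) * (γ {p : ℝ × ℝ | s < p.1}).toReal
        - (if s < 0 then (1:ℝ) else 0) * (γ {p : ℝ × ℝ | t < p.2}).toReal
        + (if s < 0 then (1:ℝ) else 0) * (if t < 0 then (1:ℝ) else 0) := by
  have hA : MeasurableSet {p : ℝ × ℝ | s < p.1} := measurableSet_lt measurable_const measurable_fst
  have hB : MeasurableSet {p : ℝ × ℝ | t < p.2} := measurableSet_lt measurable_const measurable_snd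
  set cs : ℝ := if s < 0 then 1 else 0 with hcs
  set ct : ℝ := if t < 0 then 1 else 0 with hct
  have hfun : ∀ p : ℝ × ℝ, ee p.1 s * ee p.2 t
      = ({p : ℝ × ℝ | s < p.1} ∩ {p : ℝ × ℝ | t < p.2}).indicator (fun _ => (1:ℝ)) p
        - ct * ({p : ℝ × ℝ | s < p.1}).indicator (fun _ => (1:ℝ)) p
        - cs * ({p : ℝ × ℝ | t < p.2}).indicator (fun _ => (1:ℝ)) p
        + cs * ct := by
    intro p
    simp only [ee, indicator_apply, mem_inter_iff, mem_setOf_eq, hcs, hct]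
    by_cases h1 : s < p.1 <;> by_cases h2 : t < p.2 <;> by_cases h3 : s < 0 <;>
      by_cases h4 : t < 0 <;> simp [h1, h2, h3, h4] <;> ring
  have iAB : Integrable (({p : ℝ × ℝ | s < p.1} ∩ {p : ℝ × ℝ | t < p.2}).indicator
      (fun _ => (1:ℝ))) γ := (integrable_const (1:ℝ)).indicator (hA.inter hB)
  have iA : Integrable (({p : ℝ × ℝ | s < p.1}).indicator (fun _ => (1:ℝ))) γ :=
    (integrable_const (1:ℝ)).indicator hA
  have iB : Integrable (({p : ℝ × ℝ | t < p.2}).indicator (fun _ => (1:ℝ))) γ :=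
    (integrable_const (1:ℝ)).indicator hB
  calc ∫ p, ee p.1 s * ee p.2 t ∂γ
      = ∫ p, (({p : ℝ × ℝ | s < p.1} ∩ {p : ℝ × ℝ | t < p.2}).indicator (fun _ => (1:ℝ)) p
          - ct * ({p : ℝ × ℝ | s < p.1}).indicator (fun _ => (1:ℝ)) p
          - cs * ({p : ℝ × ℝ | t < p.2}).indicator (fun _ => (1:ℝ)) p
          + cs * ct) ∂γ := integral_congr_ae (Eventually.of_forall hfun)
    _ = (γ ({p : ℝ × ℝ | s < p.1} ∩ {p : ℝ × ℝ | t < p.2})).toReal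
          - ct * (γ {p : ℝ × ℝ | s < p.1}).toReal
          - cs * (γ {p : ℝ × ℝ | t < p.2}).toReal + cs * ct := by
        have i3 : Integrable (fun p : ℝ × ℝ =>
            ({p : ℝ × ℝ | s < p.1} ∩ {p : ℝ × ℝ | t < p.2}).indicator (fun _ => (1:ℝ)) p
              - ct * ({p : ℝ × ℝ | s < p.1}).indicator (fun _ => (1:ℝ)) p) γ :=
          iAB.sub (iA.const_mul ct)
        have i4 : Integrable (fun p : ℝ × ℝ =>
            ({p : ℝ × ℝ | s < p.1} ∩ {p : ℝ × ℝ | t < p.2}).indicator (fun _ => (1:ℝ)) p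
              - ct * ({p : ℝ × ℝ | s < p.1}).indicator (fun _ => (1:ℝ)) p
              - cs * ({p : ℝ × ℝ | t < p.2}).indicator (fun _ => (1:ℝ)) p) γ :=
          i3.sub (iB.const_mul cs)
        rw [integral_add i4 (integrable_const _),
          integral_sub i3 (iB.const_mul cs),
          integral_sub iAB (iA.const_mul ct),
          integral_const_mul _ _, integral_const_mul _ _,
          integral_indicator_const (1:ℝ) (hA.inter hB),
          integral_indicator_const (1:ℝ) hA, integral_indicator_const (1:ℝ) hB]
        simp [measure_univ, measureReal_def]

lemma marginal_fst_apply (γ : Measure (ℝ × ℝ)) (s : ℝ) :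
    γ {p : ℝ × ℝ | s < p.1} = γ.map Prod.fst (Ioi s) := by
  rw [Measure.map_apply measurable_fst measurableSet_Ioi]
  rfl

lemma marginal_snd_apply (γ : Measure (ℝ × ℝ)) (t : ℝ) :
    γ {p : ℝ × ℝ | t < p.2} = γ.map Prod.snd (Ioi t) := by
  rw [Measure.map_apply measurable_snd measurableSet_Ioi]
  rfl

lemma hoeffding (γ γ' : Measure (ℝ × ℝ)) [IsProbabilityMeasure γ] [IsProbabilityMeasure γ']
    (hfst : γ.map Prod.fst = γ'.map Prod.fst) (hsnd : γ.map Prod.snd = γ'.map Prod.snd)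
    (hint : Integrable (fun p : ℝ × ℝ => p.1 * p.2) γ)
    (hint' : Integrable (fun p : ℝ × ℝ => p.1 * p.2) γ')
    (hle : ∀ s t : ℝ, γ ({p : ℝ × ℝ | s < p.1} ∩ {p : ℝ × ℝ | t < p.2})
      ≤ γ' ({p : ℝ × ℝ | s < p.1} ∩ {p : ℝ × ℝ | t < p.2})) :
    ∫ p, p.1 * p.2 ∂γ ≤ ∫ p, p.1 * p.2 ∂γ' := by
  rw [integral_mul_eq γ hint, integral_mul_eq γ' hint']
  refine integral_mono (integrable_slice_integral γ hint) (integrable_slice_integral γ' hint')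
    fun q => ?_
  rw [slice_eq γ q.1 q.2, slice_eq γ' q.1 q.2]
  have e1 : γ {p : ℝ × ℝ | q.1 < p.1} = γ' {p : ℝ × ℝ | q.1 < p.1} := by
    rw [marginal_fst_apply, marginal_fst_apply, hfst]
  have e2 : γ {p : ℝ × ℝ | q.2 < p.2} = γ' {p : ℝ × ℝ | q.2 < p.2} := by
    rw [marginal_snd_apply, marginal_snd_apply, hsnd]
  have h3 := (ENNReal.toReal_le_toReal (measure_ne_top γ _) (measure_ne_top γ' _)).mpr
    (hle q.1 q.2)
  rw [e1, e2]
  gcongr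

end Hoeffding

/-- the monotone rearrangement `Q_ν ∘ F_μ` pushes `μ` forward to `ν`
and is an optimal transport map for the quadratic cost. -/
theorem monotone_rearrangement_optimal
    (μ ν : Measure ℝ) [IsProbabilityMeasure μ] [IsProbabilityMeasure ν]
    [NullSingletonClass μ]
    (h2μ : Integrable (fun x => x ^ 2) μ) (h2ν : Integrable (fun x => x ^ 2) ν) :
    μ.map (fun x => quantile ν (ProbabilityTheory.cdf μ x)) = ν ∧
    W2sq μ ν = ∫ x, (quantile ν (ProbabilityTheory.cdf μ x) - x) ^ 2 ∂μ := by
  set T : ℝ → ℝ := fun x => quantile ν (cdf μ x) with hTdef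
  have hT : Measurable T := (measurable_quantile ν).comp (monotone_cdf μ).measurable
  have hmap : μ.map T = ν := map_monotone_rearrangement μ ν
  refine ⟨hmap, ?_⟩
  have hpair : Measurable fun x => (x, T x) := measurable_id.prodMk hT
  set γ₀ : Measure (ℝ × ℝ) := μ.map (fun x => (x, T x)) with hγ₀
  have hprob0 : IsProbabilityMeasure γ₀ := Measure.isProbabilityMeasure_map hpair.aemeasurable
  have hfst0 : γ₀.map Prod.fst = μ := by
    rw [hγ₀, Measure.map_map measurable_fst hpair]
    exact Measure.map_id
  have hsnd0 : γ₀.map Prod.snd = ν := by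
    rw [hγ₀, Measure.map_map measurable_snd hpair]
    exact hmap
  have hcost0 : ∫ p, ‖p.1 - p.2‖ ^ 2 ∂γ₀ = ∫ x, (T x - x) ^ 2 ∂μ := by
    rw [hγ₀, integral_map (f := fun p : ℝ × ℝ => ‖p.1 - p.2‖ ^ 2) hpair.aemeasurable
      ((measurable_fst.sub measurable_snd).norm.pow_const 2).aestronglyMeasurable]
    refine integral_congr_ae (Eventually.of_forall fun x => ?_)
    simp only [Real.norm_eq_abs, sq_abs]
    ring
  have aux : ∀ (γ : Measure (ℝ × ℝ)), IsProbabilityMeasure γ →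
      γ.map Prod.fst = μ → γ.map Prod.snd = ν →
      Integrable (fun p : ℝ × ℝ => p.1 * p.2) γ ∧
      ∫ p, ‖p.1 - p.2‖ ^ 2 ∂γ
        = (∫ x, x ^ 2 ∂μ) + (∫ y, y ^ 2 ∂ν) - 2 * ∫ p, p.1 * p.2 ∂γ := by
    intro γ _ hfst hsnd
    have hI1 : Integrable (fun p : ℝ × ℝ => p.1 ^ 2) γ := by
      exact (integrable_map_measure (g := fun x : ℝ => x ^ 2)
        (by fun_prop)
        measurable_fst.aemeasurable (f := Prod.fst) (μ := γ)).mp (by rwa [hfst])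
    have hI2 : Integrable (fun p : ℝ × ℝ => p.2 ^ 2) γ := by
      exact (integrable_map_measure (g := fun y : ℝ => y ^ 2)
        (by fun_prop)
        measurable_snd.aemeasurable (f := Prod.snd) (μ := γ)).mp (by rwa [hsnd])
    have hsum : Integrable (fun p : ℝ × ℝ => p.1 ^ 2 + p.2 ^ 2) γ := hI1.add hI2
    have hIxy : Integrable (fun p : ℝ × ℝ => p.1 * p.2) γ := by
      refine hsum.mono ((measurable_fst.mul measurable_snd).aestronglyMeasurable)
        (Eventually.of_forall fun p => ?_)
      simp only [Real.norm_eq_abs, abs_mul]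
      have h1 : |p.1| * |p.2| ≤ p.1 ^ 2 + p.2 ^ 2 := by
        nlinarith [sq_nonneg (|p.1| - |p.2|), sq_abs p.1, sq_abs p.2, abs_nonneg p.1,
          abs_nonneg p.2]
      have h2 : p.1 ^ 2 + p.2 ^ 2 ≤ |p.1 ^ 2 + p.2 ^ 2| := le_abs_self _
      linarith
    refine ⟨hIxy, ?_⟩
    have hpt : ∀ p : ℝ × ℝ, ‖p.1 - p.2‖ ^ 2 = p.1 ^ 2 + p.2 ^ 2 - 2 * (p.1 * p.2) := by
      intro p
      rw [Real.norm_eq_abs, sq_abs]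
      ring
    have hm1 : ∫ p, p.1 ^ 2 ∂γ = ∫ x, x ^ 2 ∂μ := by
      rw [← hfst, integral_map (f := fun x : ℝ => x ^ 2) measurable_fst.aemeasurable
        (by fun_prop)]
    have hm2 : ∫ p, p.2 ^ 2 ∂γ = ∫ y, y ^ 2 ∂ν := by
      rw [← hsnd, integral_map (f := fun y : ℝ => y ^ 2) measurable_snd.aemeasurable
        (by fun_prop)]
    calc ∫ p, ‖p.1 - p.2‖ ^ 2 ∂γ
        = ∫ p, (p.1 ^ 2 + p.2 ^ 2 - 2 * (p.1 * p.2)) ∂γ :=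
          integral_congr_ae (Eventually.of_forall hpt)
      _ = (∫ p, p.1 ^ 2 ∂γ) + (∫ p, p.2 ^ 2 ∂γ) - 2 * ∫ p, p.1 * p.2 ∂γ := by
          rw [integral_sub hsum (hIxy.const_mul 2), integral_add hI1 hI2,
            integral_const_mul _ _]
      _ = (∫ x, x ^ 2 ∂μ) + (∫ y, y ^ 2 ∂ν) - 2 * ∫ p, p.1 * p.2 ∂γ := by
          rw [hm1, hm2]
  obtain ⟨hIxy0, hexp0⟩ := aux γ₀ hprob0 hfst0 hsnd0
  set G : Set ℝ := {x | 0 < cdf μ x ∧ cdf μ x < 1} with hG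
  have hGc : μ Gᶜ = 0 := measure_bad_null μ
  have hTmono : ∀ x ∈ G, ∀ y ∈ G, x ≤ y → T x ≤ T y := by
    intro x hx y hy hxy
    exact quantile_mono_middle hx.1 hy.2 ((monotone_cdf μ) hxy)
  -- orthant comparison: the quantile coupling maximizes upper orthant probabilities
  have horth : ∀ (γ : Measure (ℝ × ℝ)), γ.map Prod.fst = μ → γ.map Prod.snd = ν →
      ∀ s t : ℝ, γ ({p : ℝ × ℝ | s < p.1} ∩ {p : ℝ × ℝ | t < p.2})
        ≤ γ₀ ({p : ℝ × ℝ | s < p.1} ∩ {p : ℝ × ℝ | t < p.2}) := by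
    intro γ hfst hsnd s t
    have hU : μ {x | t < T x} = ν (Ioi t) := by
      rw [← hmap, Measure.map_apply hT measurableSet_Ioi]
      rfl
    have hγ₀val : γ₀ ({p : ℝ × ℝ | s < p.1} ∩ {p : ℝ × ℝ | t < p.2})
        = μ ({x | s < x} ∩ {x | t < T x}) := by
      rw [hγ₀, Measure.map_apply hpair
        ((measurableSet_lt measurable_const measurable_fst).inter
          (measurableSet_lt measurable_const measurable_snd))]
      rfl
    have h1 : γ ({p : ℝ × ℝ | s < p.1} ∩ {p : ℝ × ℝ | t < p.2}) ≤ μ (Ioi s) := by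
      refine le_trans (measure_mono inter_subset_left) ?_
      rw [marginal_fst_apply, hfst]
    have h2 : γ ({p : ℝ × ℝ | s < p.1} ∩ {p : ℝ × ℝ | t < p.2}) ≤ ν (Ioi t) := by
      refine le_trans (measure_mono inter_subset_right) ?_
      rw [marginal_snd_apply, hsnd]
    rw [hγ₀val]
    -- reduce to the good set G
    have hg1 : μ ({x | s < x} ∩ {x | t < T x})
        = μ (({x | s < x} ∩ G) ∩ ({x | t < T x} ∩ G)) := by
      rw [show ({x | s < x} ∩ G) ∩ ({x | t < T x} ∩ G)
          = ({x | s < x} ∩ {x | t < T x}) ∩ G by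
        ext z; simp only [mem_inter_iff, mem_setOf_eq]; tauto]
      rw [measure_inter_conull hGc]
    -- the two G-restricted sets are nested
    have hnest : ({x | s < x} ∩ G) ⊆ ({x | t < T x} ∩ G)
        ∨ ({x | t < T x} ∩ G) ⊆ ({x | s < x} ∩ G) := by
      by_contra hcon
      push_neg at hcon
      obtain ⟨hc1, hc2⟩ := hcon
      obtain ⟨a, ha, hna⟩ := not_subset.mp hc1
      obtain ⟨u, hu, hnu⟩ := not_subset.mp hc2
      rcases le_total a u with hau | hua
      · have : u ∈ {x | s < x} ∩ G :=
          ⟨lt_of_lt_of_le ha.1 hau, hu.2⟩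
        exact hnu this
      · have : a ∈ {x | t < T x} ∩ G :=
          ⟨lt_of_lt_of_le hu.1 (hTmono u hu.2 a ha.2 hua), ha.2⟩
        exact hna this
    rw [hg1]
    rcases hnest with hss | hss
    · rw [inter_eq_left.mpr hss, measure_inter_conull hGc]
      exact h1.trans (measure_mono fun z hz => hz)
    · rw [inter_eq_right.mpr hss, measure_inter_conull hGc]
      exact h2.trans (le_of_eq hU.symm)
  -- conclusion
  have hnonneg : ∀ b ∈ ((fun γ : Measure (ℝ × ℝ) => ∫ p, ‖p.1 - p.2‖ ^ 2 ∂γ) ''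
      {γ | γ.map Prod.fst = μ ∧ γ.map Prod.snd = ν}), (0:ℝ) ≤ b := by
    rintro b ⟨γ, _, rfl⟩
    exact integral_nonneg fun p => by positivity
  have hmem : ∫ x, (T x - x) ^ 2 ∂μ ∈ ((fun γ : Measure (ℝ × ℝ) => ∫ p, ‖p.1 - p.2‖ ^ 2 ∂γ) ''
      {γ | γ.map Prod.fst = μ ∧ γ.map Prod.snd = ν}) :=
    ⟨γ₀, ⟨hfst0, hsnd0⟩, hcost0⟩
  refine le_antisymm (csInf_le ⟨0, fun b hb => hnonneg b hb⟩ hmem) ?_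
  refine le_csInf ⟨_, hmem⟩ ?_
  rintro b ⟨γ, ⟨hfst, hsnd⟩, rfl⟩
  show ∫ x, (T x - x) ^ 2 ∂μ ≤ ∫ p, ‖p.1 - p.2‖ ^ 2 ∂γ
  have hprobγ : IsProbabilityMeasure γ := by
    constructor
    have h := Measure.map_apply (μ := γ) measurable_fst MeasurableSet.univ
    rw [Set.preimage_univ] at h
    rw [← h, hfst, measure_univ]
  obtain ⟨hIxy, hexp⟩ := aux γ hprobγ hfst hsnd
  have hhoef : ∫ p, p.1 * p.2 ∂γ ≤ ∫ p, p.1 * p.2 ∂γ₀ := by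
    refine hoeffding γ γ₀ ?_ ?_ hIxy hIxy0 (horth γ hfst hsnd)
    · rw [hfst, hfst0]
    · rw [hsnd, hsnd0]
  rw [← hcost0, hexp, hexp0]
  linarith
end

section
/- For atomless probability measures μ, ν on ℝ with finite second moments and quantile functions Q_μ, Q_ν, we have W_2(μ,ν)² = ∫₀¹ (Q_μ(t) - Q_ν(t))² dt. Consequently, for any finite collection m₁,…,m_L of such measures with weights λᵢ ≥ 0 summing to 1, the measure with quantile function Σᵢ λᵢ Q_{mᵢ} minimizes m̄ ↦ Σᵢ λᵢ W_2(mᵢ, m̄)² over all probability measures m̄ on ℝ with finite second moment. -/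
set_option linter.unusedSectionVars false
set_option linter.unusedVariables false


open MeasureTheory ProbabilityTheory Filter

section Dev
open Set

section QuantileBasics

variable (μ : Measure ℝ) [IsProbabilityMeasure μ]

lemma quantile_set_nonempty {t : ℝ} (h1 : t < 1) : {x | t ≤ cdf μ x}.Nonempty := by
  have h : ∀ᶠ x in atTop, t < cdf μ x :=
    (tendsto_cdf_atTop (μ := μ)).eventually (eventually_gt_nhds h1)
  obtain ⟨x, hx⟩ := h.exists
  exact ⟨x, hx.le⟩

lemma quantile_set_bddBelow {t : ℝ} (h0 : 0 < t) : BddBelow {x | t ≤ cdf μ x} := by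
  have h : ∀ᶠ x in atBot, cdf μ x < t :=
    (tendsto_cdf_atBot (μ := μ)).eventually (eventually_lt_nhds h0)
  obtain ⟨x, hx⟩ := h.exists
  refine ⟨x, fun z hz => ?_⟩
  by_contra hzx
  exact absurd (hz.trans (monotone_cdf μ (le_of_not_ge hzx))) (not_le.mpr hx)

lemma quantile_le_iff_s3 {t x : ℝ} (h0 : 0 < t) (h1 : t < 1) :
    quantile μ t ≤ x ↔ t ≤ cdf μ x := by
  constructor
  · intro h
    have key : t ≤ cdf μ (quantile μ t) := by
      have hmem : ∀ y, quantile μ t < y → t ≤ cdf μ y := by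
        intro y hy
        obtain ⟨z, hz, hzy⟩ := exists_lt_of_csInf_lt (quantile_set_nonempty μ h1) hy
        exact hz.trans (monotone_cdf μ hzy.le)
      have hc : Tendsto (cdf μ) (nhdsWithin (quantile μ t) (Ioi (quantile μ t)))
          (nhds (cdf μ (quantile μ t))) :=
        ((cdf μ).right_continuous _).mono_left (nhdsWithin_mono _ Ioi_subset_Ici_self)
      exact ge_of_tendsto hc (eventually_nhdsWithin_of_forall fun y hy => hmem y hy)
    exact key.trans (monotone_cdf μ h)
  · intro h
    exact csInf_le (quantile_set_bddBelow μ h0) h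

end QuantileBasics

section More

variable (μ : Measure ℝ) [IsProbabilityMeasure μ]

lemma lt_quantile_iff {t x : ℝ} (h0 : 0 < t) (h1 : t < 1) :
    x < quantile μ t ↔ cdf μ x < t := by
  rw [← not_le, ← not_le, quantile_le_iff_s3 μ h0 h1]

lemma quantile_monotoneOn : MonotoneOn (quantile μ) (Ioo (0:ℝ) 1) := by
  intro t1 h1 t2 h2 h12
  exact csInf_le_csInf (quantile_set_bddBelow μ h1.1) (quantile_set_nonempty μ h2.2)
    (fun x hx => le_trans h12 hx)

lemma quantile_aemeasurable : AEMeasurable (quantile μ) (volume.restrict (Ioo (0:ℝ) 1)) :=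
  aemeasurable_restrict_of_monotoneOn measurableSet_Ioo (quantile_monotoneOn μ)

instance : IsProbabilityMeasure (volume.restrict (Ioo (0:ℝ) 1)) :=
  ⟨by simp [Real.volume_Ioo]⟩

lemma map_quantile : (volume.restrict (Ioo (0:ℝ) 1)).map (quantile μ) = μ := by
  haveI : IsProbabilityMeasure ((volume.restrict (Ioo (0:ℝ) 1)).map (quantile μ)) :=
    Measure.isProbabilityMeasure_map (quantile_aemeasurable μ)
  refine Measure.ext_of_Iic _ _ (fun x => ?_)
  rw [Measure.map_apply_of_aemeasurable (quantile_aemeasurable μ) measurableSet_Iic,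
    Measure.restrict_apply' measurableSet_Ioo]
  have hc0 : 0 ≤ cdf μ x := cdf_nonneg μ x
  have hc1 : cdf μ x ≤ 1 := cdf_le_one μ x
  have hset : quantile μ ⁻¹' Iic x ∩ Ioo 0 1 = Ioo (0:ℝ) 1 ∩ Iic (cdf μ x) := by
    ext t
    simp only [mem_inter_iff, mem_preimage, mem_Iic, mem_Ioo]
    constructor
    · rintro ⟨h, ht0, ht1⟩
      exact ⟨⟨ht0, ht1⟩, (quantile_le_iff_s3 μ ht0 ht1).mp h⟩
    · rintro ⟨⟨ht0, ht1⟩, h⟩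
      exact ⟨(quantile_le_iff_s3 μ ht0 ht1).mpr h, ht0, ht1⟩
  rw [hset, ← ofReal_cdf]
  rcases lt_or_ge (cdf μ x) 1 with h | h
  · have : Ioo (0:ℝ) 1 ∩ Iic (cdf μ x) = Ioc 0 (cdf μ x) := by
      ext t
      simp only [mem_inter_iff, mem_Ioo, mem_Iic, mem_Ioc]
      exact ⟨fun ⟨⟨a, _⟩, c⟩ => ⟨a, c⟩, fun ⟨a, c⟩ => ⟨⟨a, lt_of_le_of_lt c h⟩, c⟩⟩
    rw [this, Real.volume_Ioc, sub_zero]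
  · have hcx : cdf μ x = 1 := le_antisymm hc1 h
    have : Ioo (0:ℝ) 1 ∩ Iic (cdf μ x) = Ioo (0:ℝ) 1 := by
      rw [hcx]; exact inter_eq_left.mpr (fun t ht => ht.2.le)
    rw [this, Real.volume_Ioo, hcx, sub_zero]

lemma measure_Ioi_cdf (x : ℝ) : μ (Ioi x) = ENNReal.ofReal (1 - cdf μ x) := by
  have h1 : μ (Ioi x) = μ univ - μ (Iic x) := by
    rw [← compl_Iic]
    exact measure_compl measurableSet_Iic (measure_ne_top μ _)
  rw [h1, measure_univ, ← ofReal_cdf, ← ENNReal.ofReal_one,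
    ← ENNReal.ofReal_sub _ (cdf_nonneg μ x)]

end More

section Coupling

variable (μ ν : Measure ℝ) [IsProbabilityMeasure μ] [IsProbabilityMeasure ν]

noncomputable def qcoupling : Measure (ℝ × ℝ) :=
  (volume.restrict (Ioo (0:ℝ) 1)).map (fun t => (quantile μ t, quantile ν t))

lemma qpair_aemeasurable : AEMeasurable (fun t => (quantile μ t, quantile ν t))
    (volume.restrict (Ioo (0:ℝ) 1)) :=
  (quantile_aemeasurable μ).prodMk (quantile_aemeasurable ν)

instance : IsProbabilityMeasure (qcoupling μ ν) :=
  Measure.isProbabilityMeasure_map (qpair_aemeasurable μ ν)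

lemma qcoupling_fst : (qcoupling μ ν).map Prod.fst = μ := by
  rw [qcoupling, AEMeasurable.map_map_of_aemeasurable
    measurable_fst.aemeasurable (qpair_aemeasurable μ ν)]
  exact map_quantile μ

lemma qcoupling_snd : (qcoupling μ ν).map Prod.snd = ν := by
  rw [qcoupling, AEMeasurable.map_map_of_aemeasurable
    measurable_snd.aemeasurable (qpair_aemeasurable μ ν)]
  exact map_quantile ν

lemma vol_aux {u v : ℝ} (hu : 0 ≤ u) (hv : v ≤ 1) :
    volume (Ioo (0:ℝ) 1 ∩ Ioc u v) = ENNReal.ofReal (v - u) := by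
  rcases lt_or_ge v 1 with h | h
  · have : Ioo (0:ℝ) 1 ∩ Ioc u v = Ioc u v := inter_eq_right.mpr
      (fun t ht => ⟨lt_of_le_of_lt hu ht.1, lt_of_le_of_lt ht.2 h⟩)
    rw [this, Real.volume_Ioc]
  · have hv1 : v = 1 := le_antisymm hv h
    subst hv1
    have : Ioo (0:ℝ) 1 ∩ Ioc u 1 = Ioo u 1 := by
      ext t
      simp only [mem_inter_iff, mem_Ioo, mem_Ioc]
      exact ⟨fun ⟨⟨_, h1⟩, hu1, _⟩ => ⟨hu1, h1⟩,
        fun ⟨hu1, h1⟩ => ⟨⟨lt_of_le_of_lt hu hu1, h1⟩, hu1, h1.le⟩⟩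
    rw [this, Real.volume_Ioo]

lemma qcoupling_corner (a b : ℝ) :
    qcoupling μ ν {p : ℝ × ℝ | a < p.1 ∧ p.2 ≤ b} =
      ENNReal.ofReal (cdf ν b - cdf μ a) := by
  have hs : MeasurableSet {p : ℝ × ℝ | a < p.1 ∧ p.2 ≤ b} :=
    (measurable_fst measurableSet_Ioi).inter (measurable_snd measurableSet_Iic)
  rw [qcoupling, Measure.map_apply_of_aemeasurable (qpair_aemeasurable μ ν) hs,
    Measure.restrict_apply' measurableSet_Ioo]
  have hset : (fun t => (quantile μ t, quantile ν t)) ⁻¹' {p : ℝ × ℝ | a < p.1 ∧ p.2 ≤ b}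
      ∩ Ioo 0 1 = Ioo (0:ℝ) 1 ∩ Ioc (cdf μ a) (cdf ν b) := by
    ext t
    simp only [mem_inter_iff, mem_preimage, mem_setOf_eq, mem_Ioo, mem_Ioc]
    constructor
    · rintro ⟨⟨h1, h2⟩, ht0, ht1⟩
      exact ⟨⟨ht0, ht1⟩, (lt_quantile_iff μ ht0 ht1).mp h1, (quantile_le_iff_s3 ν ht0 ht1).mp h2⟩
    · rintro ⟨⟨ht0, ht1⟩, h1, h2⟩
      exact ⟨⟨(lt_quantile_iff μ ht0 ht1).mpr h1, (quantile_le_iff_s3 ν ht0 ht1).mpr h2⟩, ht0, ht1⟩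
  rw [hset]
  exact vol_aux (cdf_nonneg μ a) (cdf_le_one ν b)

end Coupling

section Corners

variable (μ ν : Measure ℝ) [IsProbabilityMeasure μ] [IsProbabilityMeasure ν]

lemma qcoupling_corner' (a b : ℝ) :
    qcoupling μ ν {p : ℝ × ℝ | a < p.2 ∧ p.1 ≤ b} =
      ENNReal.ofReal (cdf μ b - cdf ν a) := by
  have hs : MeasurableSet {p : ℝ × ℝ | a < p.2 ∧ p.1 ≤ b} :=
    (measurable_snd measurableSet_Ioi).inter (measurable_fst measurableSet_Iic)
  rw [qcoupling, Measure.map_apply_of_aemeasurable (qpair_aemeasurable μ ν) hs,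
    Measure.restrict_apply' measurableSet_Ioo]
  have hset : (fun t => (quantile μ t, quantile ν t)) ⁻¹' {p : ℝ × ℝ | a < p.2 ∧ p.1 ≤ b}
      ∩ Ioo 0 1 = Ioo (0:ℝ) 1 ∩ Ioc (cdf ν a) (cdf μ b) := by
    ext t
    simp only [mem_inter_iff, mem_preimage, mem_setOf_eq, mem_Ioo, mem_Ioc]
    constructor
    · rintro ⟨⟨h1, h2⟩, ht0, ht1⟩
      exact ⟨⟨ht0, ht1⟩, (lt_quantile_iff ν ht0 ht1).mp h1, (quantile_le_iff_s3 μ ht0 ht1).mp h2⟩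
    · rintro ⟨⟨ht0, ht1⟩, h1, h2⟩
      exact ⟨⟨(lt_quantile_iff ν ht0 ht1).mpr h1, (quantile_le_iff_s3 μ ht0 ht1).mpr h2⟩, ht0, ht1⟩
  rw [hset]
  exact vol_aux (cdf_nonneg ν a) (cdf_le_one μ b)

lemma coupling_fst_apply (γ : Measure (ℝ × ℝ)) (h1 : γ.map Prod.fst = μ) (a : ℝ) :
    γ {p : ℝ × ℝ | a < p.1} = μ (Ioi a) := by
  rw [← h1, Measure.map_apply measurable_fst measurableSet_Ioi]; rfl

lemma coupling_snd_apply (γ : Measure (ℝ × ℝ)) (h2 : γ.map Prod.snd = ν) (a : ℝ) :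
    γ {p : ℝ × ℝ | a < p.2} = ν (Ioi a) := by
  rw [← h2, Measure.map_apply measurable_snd measurableSet_Ioi]; rfl

lemma corner_ge (γ : Measure (ℝ × ℝ)) [IsFiniteMeasure γ]
    (h1 : γ.map Prod.fst = μ) (h2 : γ.map Prod.snd = ν) (a b : ℝ) :
    ENNReal.ofReal (cdf ν b - cdf μ a) ≤ γ {p : ℝ × ℝ | a < p.1 ∧ p.2 ≤ b} := by
  have hA : {p : ℝ × ℝ | a < p.1 ∧ p.2 ≤ b} =
      {p : ℝ × ℝ | a < p.1} \ {p : ℝ × ℝ | a < p.1 ∧ b < p.2} := by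
    ext p
    simp only [mem_setOf_eq, mem_diff, not_and, not_lt]
    constructor
    · rintro ⟨hp1, hp2⟩; exact ⟨hp1, fun _ => hp2⟩
    · rintro ⟨hp1, hp2⟩; exact ⟨hp1, hp2 hp1⟩
  have hmeas : MeasurableSet {p : ℝ × ℝ | a < p.1 ∧ b < p.2} :=
    (measurable_fst measurableSet_Ioi).inter (measurable_snd measurableSet_Ioi)
  rw [hA, measure_diff (show {p : ℝ × ℝ | a < p.1 ∧ b < p.2} ⊆ {p : ℝ × ℝ | a < p.1}
    from fun p hp => hp.1) hmeas.nullMeasurableSet (measure_ne_top γ _)]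
  have hle : γ {p : ℝ × ℝ | a < p.1 ∧ b < p.2} ≤
      min (γ {p : ℝ × ℝ | a < p.1}) (γ {p : ℝ × ℝ | b < p.2}) :=
    le_min (measure_mono fun p hp => hp.1) (measure_mono fun p hp => hp.2)
  refine le_trans ?_ (tsub_le_tsub_left hle _)
  rw [coupling_fst_apply μ γ h1, coupling_snd_apply ν γ h2,
    measure_Ioi_cdf μ, measure_Ioi_cdf ν]
  have hmin : min (ENNReal.ofReal (1 - cdf μ a)) (ENNReal.ofReal (1 - cdf ν b)) =
      ENNReal.ofReal (min (1 - cdf μ a) (1 - cdf ν b)) := by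
    rcases le_total (1 - cdf μ a) (1 - cdf ν b) with h | h
    · rw [min_eq_left (ENNReal.ofReal_le_ofReal h), min_eq_left h]
    · rw [min_eq_right (ENNReal.ofReal_le_ofReal h), min_eq_right h]
  rw [hmin, ← ENNReal.ofReal_sub _ (le_min (by linarith [cdf_le_one μ a])
    (by linarith [cdf_le_one ν b]))]
  refine ENNReal.ofReal_le_ofReal ?_
  have := min_le_right (1 - cdf μ a) (1 - cdf ν b)
  linarith

lemma corner_ge' (γ : Measure (ℝ × ℝ)) [IsFiniteMeasure γ]
    (h1 : γ.map Prod.fst = μ) (h2 : γ.map Prod.snd = ν) (a b : ℝ) :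
    ENNReal.ofReal (cdf μ b - cdf ν a) ≤ γ {p : ℝ × ℝ | a < p.2 ∧ p.1 ≤ b} := by
  have hA : {p : ℝ × ℝ | a < p.2 ∧ p.1 ≤ b} =
      {p : ℝ × ℝ | a < p.2} \ {p : ℝ × ℝ | a < p.2 ∧ b < p.1} := by
    ext p
    simp only [mem_setOf_eq, mem_diff, not_and, not_lt]
    constructor
    · rintro ⟨hp1, hp2⟩; exact ⟨hp1, fun _ => hp2⟩
    · rintro ⟨hp1, hp2⟩; exact ⟨hp1, hp2 hp1⟩
  have hmeas : MeasurableSet {p : ℝ × ℝ | a < p.2 ∧ b < p.1} :=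
    (measurable_snd measurableSet_Ioi).inter (measurable_fst measurableSet_Ioi)
  rw [hA, measure_diff (show {p : ℝ × ℝ | a < p.2 ∧ b < p.1} ⊆ {p : ℝ × ℝ | a < p.2}
    from fun p hp => hp.1) hmeas.nullMeasurableSet (measure_ne_top γ _)]
  have hle : γ {p : ℝ × ℝ | a < p.2 ∧ b < p.1} ≤
      min (γ {p : ℝ × ℝ | a < p.2}) (γ {p : ℝ × ℝ | b < p.1}) :=
    le_min (measure_mono fun p hp => hp.1) (measure_mono fun p hp => hp.2)
  refine le_trans ?_ (tsub_le_tsub_left hle _)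
  rw [coupling_fst_apply μ γ h1, coupling_snd_apply ν γ h2,
    measure_Ioi_cdf μ, measure_Ioi_cdf ν]
  have hmin : min (ENNReal.ofReal (1 - cdf ν a)) (ENNReal.ofReal (1 - cdf μ b)) =
      ENNReal.ofReal (min (1 - cdf ν a) (1 - cdf μ b)) := by
    rcases le_total (1 - cdf ν a) (1 - cdf μ b) with h | h
    · rw [min_eq_left (ENNReal.ofReal_le_ofReal h), min_eq_left h]
    · rw [min_eq_right (ENNReal.ofReal_le_ofReal h), min_eq_right h]
  rw [hmin, ← ENNReal.ofReal_sub _ (le_min (by linarith [cdf_le_one ν a])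
    (by linarith [cdf_le_one μ b]))]
  refine ENNReal.ofReal_le_ofReal ?_
  have := min_le_right (1 - cdf ν a) (1 - cdf μ b)
  linarith

end Corners

section Eset

def Eset (a b : ℝ) : Set (ℝ × ℝ) :=
  {p | min p.1 p.2 ≤ a ∧ a < max p.1 p.2 ∧ min p.1 p.2 ≤ b ∧ b < max p.1 p.2}

lemma Eset_measurable (a b : ℝ) : MeasurableSet (Eset a b) := by
  apply MeasurableSet.inter
  · exact measurableSet_le (measurable_fst.min measurable_snd) measurable_const
  apply MeasurableSet.inter
  · exact measurableSet_lt measurable_const (measurable_fst.max measurable_snd)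
  apply MeasurableSet.inter
  · exact measurableSet_le (measurable_fst.min measurable_snd) measurable_const
  · exact measurableSet_lt measurable_const (measurable_fst.max measurable_snd)

lemma Eset_decomp (a b : ℝ) : Eset a b =
    {p : ℝ × ℝ | max a b < p.1 ∧ p.2 ≤ min a b} ∪
    {p : ℝ × ℝ | max a b < p.2 ∧ p.1 ≤ min a b} := by
  ext ⟨x, y⟩
  simp only [Eset, mem_setOf_eq, mem_union]
  constructor
  · rintro ⟨h1, h2, h3, h4⟩
    rcases le_total x y with hxy | hxy
    · rw [min_eq_left hxy] at h1 h3; rw [max_eq_right hxy] at h2 h4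
      exact Or.inr ⟨max_lt h2 h4, le_min h1 h3⟩
    · rw [min_eq_right hxy] at h1 h3; rw [max_eq_left hxy] at h2 h4
      exact Or.inl ⟨max_lt h2 h4, le_min h1 h3⟩
  · rintro (⟨h1, h2⟩ | ⟨h1, h2⟩)
    · have hyx : y ≤ x := le_trans (h2.trans ((min_le_left a b).trans (le_max_left a b))) h1.le
      refine ⟨?_, ?_, ?_, ?_⟩
      · rw [min_eq_right hyx]; exact h2.trans (min_le_left a b)
      · rw [max_eq_left hyx]; exact lt_of_le_of_lt (le_max_left a b) h1
      · rw [min_eq_right hyx]; exact h2.trans (min_le_right a b)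
      · rw [max_eq_left hyx]; exact lt_of_le_of_lt (le_max_right a b) h1
    · have hxy : x ≤ y := le_trans (h2.trans ((min_le_left a b).trans (le_max_left a b))) h1.le
      refine ⟨?_, ?_, ?_, ?_⟩
      · rw [min_eq_left hxy]; exact h2.trans (min_le_left a b)
      · rw [max_eq_right hxy]; exact lt_of_le_of_lt (le_max_left a b) h1
      · rw [min_eq_left hxy]; exact h2.trans (min_le_right a b)
      · rw [max_eq_right hxy]; exact lt_of_le_of_lt (le_max_right a b) h1

def bigSet : Set ((ℝ × ℝ) × ℝ × ℝ) := {q | q.2 ∈ Eset q.1.1 q.1.2}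

lemma bigSet_measurable : MeasurableSet bigSet := by
  have hmin : Measurable fun q : (ℝ × ℝ) × ℝ × ℝ => min q.2.1 q.2.2 :=
    (measurable_fst.comp measurable_snd).min (measurable_snd.comp measurable_snd)
  have hmax : Measurable fun q : (ℝ × ℝ) × ℝ × ℝ => max q.2.1 q.2.2 :=
    (measurable_fst.comp measurable_snd).max (measurable_snd.comp measurable_snd)
  have ha : Measurable fun q : (ℝ × ℝ) × ℝ × ℝ => q.1.1 :=
    measurable_fst.comp measurable_fst
  have hb : Measurable fun q : (ℝ × ℝ) × ℝ × ℝ => q.1.2 :=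
    measurable_snd.comp measurable_fst
  exact (measurableSet_le hmin ha).inter ((measurableSet_lt ha hmax).inter
    ((measurableSet_le hmin hb).inter (measurableSet_lt hb hmax)))

lemma step1 (x y : ℝ) :
    ∫⁻ q : ℝ × ℝ, bigSet.indicator 1 (q, (x, y)) ∂(volume.prod volume) =
      ENNReal.ofReal ((x - y) ^ 2) := by
  have hset : (fun q : ℝ × ℝ => bigSet.indicator (1 : ((ℝ × ℝ) × ℝ × ℝ) → ENNReal) (q, (x, y)))
      = (Ico (min x y) (max x y) ×ˢ Ico (min x y) (max x y)).indicator 1 := by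
    ext q
    have hiff : ((q, (x, y)) ∈ bigSet) ↔
        q ∈ Ico (min x y) (max x y) ×ˢ Ico (min x y) (max x y) := by
      simp [bigSet, Eset, Set.mem_prod, and_assoc]
    by_cases hm : (q, (x, y)) ∈ bigSet
    · rw [Set.indicator_of_mem hm, Set.indicator_of_mem (hiff.mp hm)]; rfl
    · rw [Set.indicator_of_notMem hm, Set.indicator_of_notMem (fun h => hm (hiff.mpr h))]
  rw [hset, lintegral_indicator_one (measurableSet_Ico.prod measurableSet_Ico),
    Measure.prod_prod, Real.volume_Ico,
    ← ENNReal.ofReal_mul (sub_nonneg.mpr min_le_max)]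
  rw [max_sub_min_eq_abs, abs_mul_abs_self, ← pow_two]
  congr 1
  ring

lemma step2 (γ : Measure (ℝ × ℝ)) [IsProbabilityMeasure γ] :
    ∫⁻ p, ENNReal.ofReal ((p.1 - p.2) ^ 2) ∂γ =
      ∫⁻ q, γ (Eset q.1 q.2) ∂(volume.prod volume) := by
  have hmeas : Measurable (bigSet.indicator (1 : ((ℝ × ℝ) × ℝ × ℝ) → ENNReal)) :=
    measurable_one.indicator bigSet_measurable
  calc ∫⁻ p, ENNReal.ofReal ((p.1 - p.2) ^ 2) ∂γ
      = ∫⁻ p, ∫⁻ q, bigSet.indicator 1 (q, p) ∂(volume.prod volume) ∂γ := by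
        refine lintegral_congr fun p => ?_
        exact (step1 p.1 p.2).symm
    _ = ∫⁻ q, ∫⁻ p, bigSet.indicator 1 (q, p) ∂γ ∂(volume.prod volume) := by
        exact lintegral_lintegral_swap ((hmeas.comp measurable_swap).aemeasurable)
    _ = ∫⁻ q, γ (Eset q.1 q.2) ∂(volume.prod volume) := by
        refine lintegral_congr fun q => ?_
        have h : (fun p : ℝ × ℝ => bigSet.indicator (1 : ((ℝ × ℝ) × ℝ × ℝ) → ENNReal) (q, p))
            = (Eset q.1 q.2).indicator 1 := by
          ext p
          have hiff : ((q, p) ∈ bigSet) ↔ p ∈ Eset q.1 q.2 := Iff.rfl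
          by_cases hm : (q, p) ∈ bigSet
          · rw [Set.indicator_of_mem hm, Set.indicator_of_mem (hiff.mp hm)]; rfl
          · rw [Set.indicator_of_notMem hm, Set.indicator_of_notMem (fun h => hm (hiff.mpr h))]
        rw [h, lintegral_indicator_one (Eset_measurable q.1 q.2)]

end Eset

section Main

variable (μ ν : Measure ℝ) [IsProbabilityMeasure μ] [IsProbabilityMeasure ν]

lemma coupling_prob (γ : Measure (ℝ × ℝ)) (h1 : γ.map Prod.fst = μ) :
    IsProbabilityMeasure γ := by
  constructor
  have := congrArg (fun m : Measure ℝ => m univ) h1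
  simp only [Measure.map_apply measurable_fst MeasurableSet.univ, preimage_univ] at this
  rw [this, measure_univ]

lemma measure_Eset_le (γ : Measure (ℝ × ℝ)) [IsFiniteMeasure γ]
    (h1 : γ.map Prod.fst = μ) (h2 : γ.map Prod.snd = ν) (a b : ℝ) :
    qcoupling μ ν (Eset a b) ≤ γ (Eset a b) := by
  have hBm : MeasurableSet {p : ℝ × ℝ | max a b < p.2 ∧ p.1 ≤ min a b} :=
    (measurable_snd measurableSet_Ioi).inter (measurable_fst measurableSet_Iic)
  have hdisj : Disjoint {p : ℝ × ℝ | max a b < p.1 ∧ p.2 ≤ min a b}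
      {p : ℝ × ℝ | max a b < p.2 ∧ p.1 ≤ min a b} := by
    rw [Set.disjoint_left]
    intro p hp hpB
    exact absurd ((hp.1.trans_le hpB.2).trans_le min_le_max) (lt_irrefl _)
  rw [Eset_decomp, measure_union hdisj hBm, measure_union hdisj hBm]
  refine add_le_add ?_ ?_
  · rw [qcoupling_corner]; exact corner_ge μ ν γ h1 h2 _ _
  · rw [qcoupling_corner']; exact corner_ge' μ ν γ h1 h2 _ _

lemma lintegral_cost_le (γ : Measure (ℝ × ℝ)) [IsProbabilityMeasure γ]
    (h1 : γ.map Prod.fst = μ) (h2 : γ.map Prod.snd = ν) :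
    ∫⁻ p, ENNReal.ofReal ((p.1 - p.2) ^ 2) ∂(qcoupling μ ν) ≤
      ∫⁻ p, ENNReal.ofReal ((p.1 - p.2) ^ 2) ∂γ := by
  rw [step2, step2]
  exact lintegral_mono fun q => measure_Eset_le μ ν γ h1 h2 q.1 q.2

lemma integrable_cost (γ : Measure (ℝ × ℝ)) [IsProbabilityMeasure γ]
    (h1 : γ.map Prod.fst = μ) (h2 : γ.map Prod.snd = ν)
    (hμ2 : Integrable (fun x => x ^ 2) μ) (hν2 : Integrable (fun x => x ^ 2) ν) :
    Integrable (fun p : ℝ × ℝ => ‖p.1 - p.2‖ ^ 2) γ := by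
  have hsq1 : Integrable (fun p : ℝ × ℝ => p.1 ^ 2) γ := by
    have h : Integrable (fun x : ℝ => x ^ 2) (γ.map Prod.fst) := h1 ▸ hμ2
    exact (integrable_map_measure ((measurable_id.pow_const 2).aestronglyMeasurable)
      measurable_fst.aemeasurable).mp h
  have hsq2 : Integrable (fun p : ℝ × ℝ => p.2 ^ 2) γ := by
    have h : Integrable (fun x : ℝ => x ^ 2) (γ.map Prod.snd) := h2 ▸ hν2
    exact (integrable_map_measure ((measurable_id.pow_const 2).aestronglyMeasurable)
      measurable_snd.aemeasurable).mp h
  refine Integrable.mono' ((hsq1.const_mul 2).add (hsq2.const_mul 2))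
    (((continuous_fst.sub continuous_snd).norm.pow 2).aestronglyMeasurable) ?_
  refine Eventually.of_forall fun p => ?_
  have hn : ‖‖p.1 - p.2‖ ^ 2‖ = (p.1 - p.2) ^ 2 := by
    rw [Real.norm_eq_abs, Real.norm_eq_abs, abs_pow, abs_abs, sq_abs]
  rw [hn]
  simp only [Pi.add_apply]
  nlinarith [sq_nonneg (p.1 + p.2)]

lemma cost_integral_eq (γ : Measure (ℝ × ℝ)) [IsProbabilityMeasure γ]
    (hint : Integrable (fun p : ℝ × ℝ => ‖p.1 - p.2‖ ^ 2) γ) :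
    ∫ p, ‖p.1 - p.2‖ ^ 2 ∂γ = (∫⁻ p, ENNReal.ofReal ((p.1 - p.2) ^ 2) ∂γ).toReal := by
  rw [integral_eq_lintegral_of_nonneg_ae (f := fun p : ℝ × ℝ => ‖p.1 - p.2‖ ^ 2) (Eventually.of_forall fun p => by positivity)
    (((continuous_fst.sub continuous_snd).norm.pow 2).aestronglyMeasurable)]
  congr 1
  refine lintegral_congr fun p => ?_
  rw [Real.norm_eq_abs, sq_abs]

lemma cost_lintegral_ne_top (γ : Measure (ℝ × ℝ)) [IsProbabilityMeasure γ]
    (hint : Integrable (fun p : ℝ × ℝ => ‖p.1 - p.2‖ ^ 2) γ) :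
    ∫⁻ p, ENNReal.ofReal ((p.1 - p.2) ^ 2) ∂γ ≠ ⊤ := by
  have h := hint.lintegral_lt_top
  have heq : ∫⁻ p, ENNReal.ofReal ((p.1 - p.2) ^ 2) ∂γ =
      ∫⁻ p, ENNReal.ofReal (‖p.1 - p.2‖ ^ 2) ∂γ := by
    refine lintegral_congr fun p => ?_
    rw [Real.norm_eq_abs, sq_abs]
  rw [heq]
  exact h.ne

lemma qcoupling_lintegral :
    ∫⁻ p, ENNReal.ofReal ((p.1 - p.2) ^ 2) ∂(qcoupling μ ν) =
      ∫⁻ t in Ioo (0:ℝ) 1, ENNReal.ofReal ((quantile μ t - quantile ν t) ^ 2) := by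
  rw [qcoupling, lintegral_map' (by fun_prop) (qpair_aemeasurable μ ν)]

lemma target_integral_eq :
    ∫ t in Ioo (0:ℝ) 1, (quantile μ t - quantile ν t) ^ 2 =
      (∫⁻ t in Ioo (0:ℝ) 1, ENNReal.ofReal ((quantile μ t - quantile ν t) ^ 2)).toReal := by
  rw [integral_eq_lintegral_of_nonneg_ae (f := fun t => (quantile μ t - quantile ν t) ^ 2) (Eventually.of_forall fun p => by positivity)
    ((((quantile_aemeasurable μ).sub (quantile_aemeasurable ν)).pow_const 2).aestronglyMeasurable)]

theorem W2sq_eq (hμ2 : Integrable (fun x => x ^ 2) μ) (hν2 : Integrable (fun x => x ^ 2) ν) :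
    W2sq μ ν = ∫ t in Ioo (0:ℝ) 1, (quantile μ t - quantile ν t) ^ 2 := by
  have hqmem : qcoupling μ ν ∈ {γ : Measure (ℝ × ℝ) |
      γ.map Prod.fst = μ ∧ γ.map Prod.snd = ν} := ⟨qcoupling_fst μ ν, qcoupling_snd μ ν⟩
  have hqint := integrable_cost μ ν (qcoupling μ ν) (qcoupling_fst μ ν) (qcoupling_snd μ ν) hμ2 hν2
  have hqcost : ∫ p, ‖p.1 - p.2‖ ^ 2 ∂(qcoupling μ ν) =
      ∫ t in Ioo (0:ℝ) 1, (quantile μ t - quantile ν t) ^ 2 := by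
    rw [cost_integral_eq _ hqint, qcoupling_lintegral, target_integral_eq]
  have hmem2 : (∫ t in Ioo (0:ℝ) 1, (quantile μ t - quantile ν t) ^ 2) ∈
      ((fun γ : Measure (ℝ × ℝ) => ∫ p, ‖p.1 - p.2‖ ^ 2 ∂γ) ''
        {γ | γ.map Prod.fst = μ ∧ γ.map Prod.snd = ν}) :=
    ⟨qcoupling μ ν, hqmem, hqcost⟩
  have key : ∀ γ : Measure (ℝ × ℝ), γ.map Prod.fst = μ → γ.map Prod.snd = ν →
      (∫ t in Ioo (0:ℝ) 1, (quantile μ t - quantile ν t) ^ 2) ≤ ∫ p, ‖p.1 - p.2‖ ^ 2 ∂γ := by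
    intro γ h1 h2
    haveI : IsProbabilityMeasure γ := coupling_prob μ γ h1
    have hint := integrable_cost μ ν γ h1 h2 hμ2 hν2
    rw [cost_integral_eq _ hint, target_integral_eq, ← qcoupling_lintegral]
    exact ENNReal.toReal_mono (cost_lintegral_ne_top γ hint) (lintegral_cost_le μ ν γ h1 h2)
  refine le_antisymm ?_ ?_
  · refine csInf_le ⟨0, ?_⟩ hmem2
    rintro r ⟨γ, hγ, rfl⟩
    exact integral_nonneg fun p => by positivity
  · refine le_csInf ⟨_, hmem2⟩ ?_
    rintro r ⟨γ, hγ, rfl⟩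
    exact key γ hγ.1 hγ.2

end Main

section Part2

lemma quantile_sq_integrable (μ : Measure ℝ) [IsProbabilityMeasure μ]
    (hμ2 : Integrable (fun x => x ^ 2) μ) :
    Integrable (fun t => (quantile μ t) ^ 2) (volume.restrict (Ioo (0:ℝ) 1)) := by
  have h : Integrable (fun x : ℝ => x ^ 2) ((volume.restrict (Ioo (0:ℝ) 1)).map (quantile μ)) :=
    (map_quantile μ).symm ▸ hμ2
  exact (integrable_map_measure ((measurable_id.pow_const 2).aestronglyMeasurable)
    (quantile_aemeasurable μ)).mp h

lemma diff_sq_integrable (μ ν : Measure ℝ) [IsProbabilityMeasure μ] [IsProbabilityMeasure ν]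
    (hμ2 : Integrable (fun x => x ^ 2) μ) (hν2 : Integrable (fun x => x ^ 2) ν) :
    Integrable (fun t => (quantile μ t - quantile ν t) ^ 2) (volume.restrict (Ioo (0:ℝ) 1)) := by
  refine Integrable.mono' (((quantile_sq_integrable μ hμ2).const_mul 2).add
    ((quantile_sq_integrable ν hν2).const_mul 2))
    ((((quantile_aemeasurable μ).sub (quantile_aemeasurable ν)).pow_const 2).aestronglyMeasurable)
    (Eventually.of_forall fun t => ?_)
  have hn : ‖(quantile μ t - quantile ν t) ^ 2‖ = (quantile μ t - quantile ν t) ^ 2 := by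
    rw [Real.norm_eq_abs, abs_pow, sq_abs]
  rw [hn]
  simp only [Pi.add_apply]
  nlinarith [sq_nonneg (quantile μ t + quantile ν t)]

lemma sq_avg {L : ℕ} (w a : Fin L → ℝ) (hw1 : ∑ i, w i = 1) (c : ℝ) :
    ∑ i, w i * (a i - ∑ j, w j * a j) ^ 2 ≤ ∑ i, w i * (a i - c) ^ 2 := by
  have expand : ∀ d : ℝ, ∑ i, w i * (a i - d) ^ 2
      = ∑ i, w i * (a i) ^ 2 - 2 * d * (∑ i, w i * a i) + d ^ 2 := by
    intro d
    have h : ∀ i ∈ Finset.univ, w i * (a i - d) ^ 2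
        = w i * (a i) ^ 2 - 2 * d * (w i * a i) + d ^ 2 * w i := fun i _ => by ring
    rw [Finset.sum_congr rfl h, Finset.sum_add_distrib, Finset.sum_sub_distrib,
      ← Finset.mul_sum, ← Finset.mul_sum, hw1]
    ring
  rw [expand, expand]
  nlinarith [sq_nonneg ((∑ j, w j * a j) - c)]

end Part2


end Dev

/-- on ℝ, `W₂²` is the `L²(0,1)` distance between quantile functions,
and the measure whose quantile function is the weighted average of quantile functions
is a 2-Wasserstein barycenter. -/
theorem quantile_representation_and_barycenter
    (μ ν : Measure ℝ) [IsProbabilityMeasure μ] [IsProbabilityMeasure ν]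
    [NullSingletonClass μ] [NullSingletonClass ν]
    (hμ2 : Integrable (fun x => x ^ 2) μ) (hν2 : Integrable (fun x => x ^ 2) ν)
    (L : ℕ) (m : Fin L → Measure ℝ) (w : Fin L → ℝ)
    (hm : ∀ i, IsProbabilityMeasure (m i)) (hma : ∀ i, NullSingletonClass (m i))
    (hm2 : ∀ i, Integrable (fun x => x ^ 2) (m i))
    (hw : ∀ i, 0 ≤ w i) (hw1 : ∑ i, w i = 1)
    (mhat : Measure ℝ) [IsProbabilityMeasure mhat]
    (hhat2 : Integrable (fun x => x ^ 2) mhat)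
    (hq : ∀ t ∈ Set.Ioo (0:ℝ) 1, quantile mhat t = ∑ i, w i * quantile (m i) t) :
    (W2sq μ ν = ∫ t in Set.Ioo (0:ℝ) 1, (quantile μ t - quantile ν t) ^ 2) ∧
    (∀ (mbar : Measure ℝ), IsProbabilityMeasure mbar →
      Integrable (fun x => x ^ 2) mbar →
      ∑ i, w i * W2sq (m i) mhat ≤ ∑ i, w i * W2sq (m i) mbar) := by

  constructor
  · exact W2sq_eq μ ν hμ2 hν2
  · intro mbar hbar hbar2
    haveI := hbar
    have hint_hat : ∀ i, Integrable (fun t => (quantile (m i) t - quantile mhat t) ^ 2)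
        (volume.restrict (Set.Ioo (0:ℝ) 1)) := fun i => by
      haveI := hm i; exact diff_sq_integrable _ _ (hm2 i) hhat2
    have hint_bar : ∀ i, Integrable (fun t => (quantile (m i) t - quantile mbar t) ^ 2)
        (volume.restrict (Set.Ioo (0:ℝ) 1)) := fun i => by
      haveI := hm i; exact diff_sq_integrable _ _ (hm2 i) hbar2
    have lhs_eq : ∑ i, w i * W2sq (m i) mhat =
        ∫ t in Set.Ioo (0:ℝ) 1, ∑ i, w i * (quantile (m i) t - quantile mhat t) ^ 2 := by
      rw [integral_finset_sum _ (fun i _ => (hint_hat i).const_mul (w i))]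
      refine Finset.sum_congr rfl fun i _ => ?_
      haveI := hm i
      rw [W2sq_eq (m i) mhat (hm2 i) hhat2, MeasureTheory.integral_const_mul]
    have rhs_eq : ∑ i, w i * W2sq (m i) mbar =
        ∫ t in Set.Ioo (0:ℝ) 1, ∑ i, w i * (quantile (m i) t - quantile mbar t) ^ 2 := by
      rw [integral_finset_sum _ (fun i _ => (hint_bar i).const_mul (w i))]
      refine Finset.sum_congr rfl fun i _ => ?_
      haveI := hm i
      rw [W2sq_eq (m i) mbar (hm2 i) hbar2, MeasureTheory.integral_const_mul]
    rw [lhs_eq, rhs_eq]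
    refine integral_mono_ae (integrable_finset_sum _ (fun i _ => (hint_hat i).const_mul (w i)))
      (integrable_finset_sum _ (fun i _ => (hint_bar i).const_mul (w i))) ?_
    filter_upwards [ae_restrict_mem measurableSet_Ioo] with t ht
    have hqt := hq t ht
    rw [hqt]
    exact sq_avg w (fun i => quantile (m i) t) hw1 (quantile mbar t)
end

section
/- Let μ have a log-concave density f on ℝ (so -log f is convex) with quantile function Q. Then the derivative Q'(y) = 1/f(Q(y)) is a convex positive function on (0,1). -/
open MeasureTheory ProbabilityTheory Filter

/-- A convex function on `ℝ` has a right derivative everywhere, and one can choose it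
monotone. -/
lemma aux_rightDeriv {g : ℝ → ℝ} (hg : ConvexOn ℝ Set.univ g) :
    ∃ gd : ℝ → ℝ, Monotone gd ∧ ∀ x, HasDerivWithinAt g (gd x) (Set.Ioi x) x := by
  have hb : ∀ x : ℝ, BddBelow (slope g x '' Set.Ioi x) := by
    intro x
    refine ⟨slope g x (x - 1), ?_⟩
    rintro _ ⟨z, hz, rfl⟩
    have h := hg.slope_mono_adjacent (Set.mem_univ (x - 1)) (Set.mem_univ z)
      (by linarith : x - 1 < x) hz
    rw [slope_def_field, slope_def_field,
      show (g (x - 1) - g x) / (x - 1 - x) = (g x - g (x - 1)) / (x - (x - 1)) by ring]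
    exact h
  have hmono : ∀ x : ℝ, MonotoneOn (slope g x) (Set.Ioi x) := by
    intro x
    have := hg.slope_mono (Set.mem_univ x)
    exact this.mono (fun z hz => ⟨Set.mem_univ z, ne_of_gt hz⟩)
  refine ⟨fun x => sInf (slope g x '' Set.Ioi x), ?_, ?_⟩
  · intro x1 x2 h12
    rcases eq_or_lt_of_le h12 with rfl | hlt
    · exact le_rfl
    · refine le_csInf ((Set.nonempty_Ioi).image _) ?_
      rintro _ ⟨z, hz, rfl⟩
      have h1 : sInf (slope g x1 '' Set.Ioi x1) ≤ slope g x1 x2 :=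
        csInf_le (hb x1) (Set.mem_image_of_mem _ hlt)
      have h2 : slope g x1 x2 ≤ slope g x2 z := by
        rw [slope_def_field, slope_def_field]
        exact hg.slope_mono_adjacent (Set.mem_univ x1) (Set.mem_univ z) hlt hz
      linarith
  · intro x
    rw [hasDerivWithinAt_iff_tendsto_slope]
    rw [Set.diff_singleton_eq_self (by simp : x ∉ Set.Ioi x)]
    exact (hmono x).tendsto_nhdsGT (hb x)

lemma aux_inv_le {u v a b : ℝ} (hu : 0 < u) (hv : 0 < v) (ha : 0 ≤ a) (hb : 0 ≤ b)
    (hab : a + b = 1) : 1 / (a * u + b * v) ≤ a * (1 / u) + b * (1 / v) := by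
  have hb' : b = 1 - a := by linarith
  subst hb'
  have h1 : 0 < a * u + (1 - a) * v := by
    rcases ha.lt_or_eq with ha' | ha'
    · nlinarith [mul_pos ha' hu, mul_nonneg hb hv.le]
    · rw [← ha']; simpa using hv
  rw [mul_one_div, mul_one_div, div_add_div _ _ hu.ne' hv.ne',
    div_le_div_iff₀ h1 (by positivity)]
  nlinarith [mul_nonneg (mul_nonneg ha hb) (sq_nonneg (u - v))]

/-- for a log-concave positive density `f`, the quantile function `Q`
of `μ = f·dx` is differentiable on `(0,1)` with derivative `Q'(y) = 1/f(Q(y))`, which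
is a convex positive function on `(0,1)`. -/
theorem logconcave_quantile_deriv
    (f : ℝ → ℝ) (hfpos : ∀ x, 0 < f x) (hfmeas : Measurable f)
    (hlc : ConvexOn ℝ Set.univ (fun x => -Real.log (f x)))
    (μ : Measure ℝ) (hμ : μ = volume.withDensity (fun x => ENNReal.ofReal (f x)))
    [IsProbabilityMeasure μ] :
    (∀ y ∈ Set.Ioo (0:ℝ) 1, HasDerivAt (quantile μ) (1 / f (quantile μ y)) y) ∧
    ConvexOn ℝ (Set.Ioo (0:ℝ) 1) (fun y => 1 / f (quantile μ y)) ∧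
    (∀ y ∈ Set.Ioo (0:ℝ) 1, 0 < 1 / f (quantile μ y)) := by
  set g : ℝ → ℝ := fun x => -Real.log (f x) with hgdef
  have hgcont : Continuous g :=
    continuousOn_univ.mp (hlc.continuousOn isOpen_univ)
  have hfe : ∀ x, f x = Real.exp (-(g x)) := by
    intro x; simp [hgdef, Real.exp_log (hfpos x)]
  have hfcont : Continuous f := by
    have h : f = fun x => Real.exp (-(g x)) := funext hfe
    rw [h]; exact Real.continuous_exp.comp hgcont.neg
  -- the increments of the cdf
  have hFint : ∀ a b : ℝ, a ≤ b → cdf μ b - cdf μ a = ∫ x in a..b, f x := by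
    intro a b hab
    rw [cdf_eq_real, cdf_eq_real, measureReal_def, measureReal_def]
    have hsplit : μ (Set.Iic b) = μ (Set.Iic a) + μ (Set.Ioc a b) := by
      rw [← measure_union (Set.Iic_disjoint_Ioc le_rfl) measurableSet_Ioc,
        Set.Iic_union_Ioc_eq_Iic hab]
    rw [hsplit, ENNReal.toReal_add (measure_ne_top μ _) (measure_ne_top μ _)]
    have hIoc : (μ (Set.Ioc a b)).toReal = ∫ x in Set.Ioc a b, f x := by
      rw [hμ, withDensity_apply _ measurableSet_Ioc]
      exact (integral_eq_lintegral_of_nonneg_ae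
        (Filter.Eventually.of_forall fun x => (hfpos x).le) hfcont.aestronglyMeasurable).symm
    rw [intervalIntegral.integral_of_le hab, ← hIoc]
    ring
  -- strict monotonicity of the cdf
  have hFmono : StrictMono (fun z => (cdf μ z : ℝ)) := by
    intro a b hab
    have h := hFint a b hab.le
    have hpos : 0 < ∫ x in a..b, f x :=
      intervalIntegral.intervalIntegral_pos_of_pos (hfcont.intervalIntegrable a b) hfpos hab
    simp only
    linarith
  have hF0 : ∀ x : ℝ, 0 < (cdf μ x : ℝ) :=
    fun x => lt_of_le_of_lt (cdf_nonneg μ (x - 1)) (hFmono (by linarith : x - 1 < x))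
  have hF1 : ∀ x : ℝ, (cdf μ x : ℝ) < 1 :=
    fun x => lt_of_lt_of_le (hFmono (by linarith : x < x + 1)) (cdf_le_one μ (x + 1))
  -- derivative of the cdf
  have hFderiv : ∀ x : ℝ, HasDerivAt (fun z => (cdf μ z : ℝ)) (f x) x := by
    intro x
    have hrepr : ∀ z : ℝ, (cdf μ z : ℝ) = cdf μ 0 + ∫ t in (0:ℝ)..z, f t := by
      intro z
      rcases le_total (0:ℝ) z with h | h
      · have := hFint 0 z h; linarith
      · have := hFint z 0 h
        rw [intervalIntegral.integral_symm]
        linarith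
    have hd : HasDerivAt (fun z => (cdf μ 0 : ℝ) + ∫ t in (0:ℝ)..z, f t) (f x) x :=
      ((hfcont.integral_hasStrictDerivAt 0 x).hasDerivAt).const_add _
    exact hd.congr_of_eventuallyEq (Filter.Eventually.of_forall hrepr)
  have hFc : Continuous (fun z => (cdf μ z : ℝ)) :=
    continuous_iff_continuousAt.2 fun x => (hFderiv x).continuousAt
  -- surjectivity onto (0,1) and inverse property of the quantile
  have hQ : ∀ y ∈ Set.Ioo (0:ℝ) 1, (cdf μ (quantile μ y) : ℝ) = y := by
    intro y hy
    obtain ⟨a, ha⟩ : ∃ a, (cdf μ a : ℝ) < y := ((tendsto_cdf_atBot μ).eventually_lt_const hy.1).exists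
    obtain ⟨b, hb⟩ : ∃ b, y < (cdf μ b : ℝ) := ((tendsto_cdf_atTop μ).eventually_const_lt hy.2).exists
    have hab : a < b := hFmono.lt_iff_lt.mp (ha.trans hb)
    obtain ⟨x, _, hx⟩ := intermediate_value_Ioo hab.le hFc.continuousOn (Set.mem_Ioo.mpr ⟨ha, hb⟩)
    have hqx : quantile μ y = x := by
      have hset : {z | y ≤ (cdf μ z : ℝ)} = Set.Ici x := by
        ext z
        simp only [Set.mem_setOf_eq, Set.mem_Ici]
        rw [← hx]
        exact hFmono.le_iff_le
      unfold quantile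
      rw [hset, csInf_Ici]
    rw [hqx]; exact hx
  -- strict monotonicity of the quantile on (0,1)
  have hQmono : ∀ y1 ∈ Set.Ioo (0:ℝ) 1, ∀ y2 ∈ Set.Ioo (0:ℝ) 1, y1 < y2 →
      quantile μ y1 < quantile μ y2 := by
    intro y1 h1 y2 h2 h12
    apply hFmono.lt_iff_lt.mp
    rw [hQ y1 h1, hQ y2 h2]; exact h12
  -- continuity of the quantile on (0,1)
  have hQcont : ∀ y ∈ Set.Ioo (0:ℝ) 1, ContinuousAt (quantile μ) y := by
    intro y hy
    have hx := hQ y hy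
    rw [ContinuousAt, tendsto_order]
    constructor
    · intro a hax
      have h1 : (cdf μ a : ℝ) < y := by rw [← hx]; exact hFmono hax
      filter_upwards [Ioo_mem_nhds h1 hy.2] with y' hy'
      have hy'' : y' ∈ Set.Ioo (0:ℝ) 1 := ⟨(hF0 a).trans hy'.1, hy'.2⟩
      exact hFmono.lt_iff_lt.mp (by rw [hQ y' hy'']; exact hy'.1)
    · intro b hxb
      have h1 : y < (cdf μ b : ℝ) := by rw [← hx]; exact hFmono hxb
      filter_upwards [Ioo_mem_nhds hy.1 h1] with y' hy'
      have hy'' : y' ∈ Set.Ioo (0:ℝ) 1 := ⟨hy'.1, hy'.2.trans (hF1 b)⟩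
      exact hFmono.lt_iff_lt.mp (by rw [hQ y' hy'']; exact hy'.2)
  have hQderiv : ∀ y ∈ Set.Ioo (0:ℝ) 1, HasDerivAt (quantile μ) (1 / f (quantile μ y)) y := by
    intro y hy
    have h := HasDerivAt.of_local_left_inverse (hQcont y hy) (hFderiv (quantile μ y))
      (hfpos _).ne' ?_
    · rwa [one_div]
    · filter_upwards [Ioo_mem_nhds hy.1 hy.2] with y' hy' using hQ y' hy'
  refine ⟨hQderiv, ?_, fun y hy => one_div_pos.mpr (hfpos _)⟩
  obtain ⟨gd, hgdmono, hgd⟩ := aux_rightDeriv hlc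
  -- right derivative of f
  have hfd : ∀ x, HasDerivWithinAt f (f x * -gd x) (Set.Ioi x) x := by
    intro x
    have h1 : HasDerivWithinAt (fun t => Real.exp (-(g t)))
        (Real.exp (-(g x)) * -gd x) (Set.Ioi x) x := ((hgd x).neg).exp
    have h : f = fun t => Real.exp (-(g t)) := funext hfe
    rw [h]
    exact h1
  set k : ℝ → ℝ := fun y => f (quantile μ y) with hk
  set φ : ℝ → ℝ := fun y => -gd (quantile μ y) with hφ
  -- right derivative of k
  have hkd : ∀ y ∈ Set.Ioo (0:ℝ) 1, HasDerivWithinAt k (φ y) (Set.Ioi y) y := by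
    intro y hy
    have hmaps : Set.MapsTo (quantile μ) (Set.Ioi y ∩ Set.Ioo 0 1) (Set.Ioi (quantile μ y)) := by
      intro y' hy'
      exact hQmono y hy y' hy'.2 hy'.1
    have hcomp : HasDerivWithinAt (f ∘ quantile μ) (f (quantile μ y) * -gd (quantile μ y) * (1 / f (quantile μ y)))
        (Set.Ioi y ∩ Set.Ioo 0 1) y :=
      HasDerivWithinAt.comp y (hfd (quantile μ y))
        (((hQderiv y hy).hasDerivWithinAt).mono Set.inter_subset_left) hmaps
    have hmem : Set.Ioi y ∩ Set.Ioo 0 1 ∈ nhdsWithin y (Set.Ioi y) :=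
      Filter.inter_mem self_mem_nhdsWithin
        (mem_nhdsWithin_of_mem_nhds (Ioo_mem_nhds hy.1 hy.2))
    have := hcomp.mono_of_mem_nhdsWithin hmem
    have heq : f (quantile μ y) * -gd (quantile μ y) * (1 / f (quantile μ y)) = φ y := by
      have hne := (hfpos (quantile μ y)).ne'
      simp only [hφ]
      field_simp
    rw [heq] at this
    exact this
  -- φ is antitone on (0,1)
  have hφanti : AntitoneOn φ (Set.Ioo (0:ℝ) 1) := by
    intro y1 h1 y2 h2 h12
    rcases eq_or_lt_of_le h12 with rfl | hlt
    · exact le_rfl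
    · exact neg_le_neg (hgdmono (hQmono y1 h1 y2 h2 hlt).le)
  have hkc : ∀ y ∈ Set.Ioo (0:ℝ) 1, ContinuousAt k y :=
    fun y hy => hfcont.continuousAt.comp (hQcont y hy)
  -- FTC for k
  have hftc : ∀ a ∈ Set.Ioo (0:ℝ) 1, ∀ b ∈ Set.Ioo (0:ℝ) 1, a ≤ b →
      ∫ t in a..b, φ t = k b - k a := by
    intro a ha b hb hab
    have hsub : Set.Icc a b ⊆ Set.Ioo (0:ℝ) 1 :=
      fun z hz => ⟨ha.1.trans_le hz.1, hz.2.trans_lt hb.2⟩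
    apply intervalIntegral.integral_eq_sub_of_hasDeriv_right_of_le hab
    · exact fun z hz => (hkc z (hsub hz)).continuousWithinAt
    · exact fun z hz => hkd z (hsub (Set.mem_Icc_of_Ioo hz))
    · apply AntitoneOn.intervalIntegrable
      rw [Set.uIcc_of_le hab]
      exact hφanti.mono hsub
  have hφint : ∀ a ∈ Set.Ioo (0:ℝ) 1, ∀ b ∈ Set.Ioo (0:ℝ) 1, a ≤ b →
      IntervalIntegrable φ volume a b := by
    intro a ha b hb hab
    apply AntitoneOn.intervalIntegrable
    rw [Set.uIcc_of_le hab]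
    exact hφanti.mono (fun z hz => ⟨ha.1.trans_le hz.1, hz.2.trans_lt hb.2⟩)
  -- concavity of k
  have hkconc : ConcaveOn ℝ (Set.Ioo (0:ℝ) 1) k := by
    apply concaveOn_of_slope_anti_adjacent (convex_Ioo 0 1)
    intro x y z hx hz hxy hyz
    have hy : y ∈ Set.Ioo (0:ℝ) 1 := ⟨hx.1.trans hxy, hyz.trans hz.2⟩
    rw [← hftc x hx y hy hxy.le, ← hftc y hy z hz hyz.le]
    rw [div_le_div_iff₀ (by linarith) (by linarith)]
    have h1 : ∫ t in y..z, φ t ≤ -((z - y) * gd (quantile μ y)) := by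
      have := intervalIntegral.integral_mono_on hyz.le (hφint y hy z hz hyz.le)
        (intervalIntegrable_const) (fun t ht => hφanti hy ⟨hy.1.trans_le ht.1, ht.2.trans_lt hz.2⟩ ht.1)
      simpa [hφ] using this
    have h2 : -((y - x) * gd (quantile μ y)) ≤ ∫ t in x..y, φ t := by
      have := intervalIntegral.integral_mono_on hxy.le (intervalIntegrable_const)
        (hφint x hx y hy hxy.le) (fun t ht => hφanti ⟨hx.1.trans_le ht.1, ht.2.trans_lt hy.2⟩ hy ht.2)
      simpa [hφ] using this
    nlinarith [h1, h2, sub_pos.mpr hxy, sub_pos.mpr hyz]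
  -- convexity of 1/k
  refine ⟨convex_Ioo 0 1, ?_⟩
  intro p hp q hq a b ha hb hab
  simp only [smul_eq_mul]
  have hkp := hfpos (quantile μ p)
  have hkq := hfpos (quantile μ q)
  have hc := hkconc.2 hp hq ha hb hab
  simp only [smul_eq_mul] at hc
  have hmid : (0:ℝ) < a * k p + b * k q := by
    rcases ha.lt_or_eq with ha' | ha'
    · nlinarith
    · rw [← ha']; have : b = 1 := by linarith
      rw [this]; simpa using hkq
  calc 1 / k (a * p + b * q) ≤ 1 / (a * k p + b * k q) :=
        one_div_le_one_div_of_le hmid hc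
    _ ≤ a * (1 / k p) + b * (1 / k q) := aux_inv_le hkp hkq ha hb hab
end

section
/- Let μ̂ be an absolutely continuous measure on ℝ^q with covariance Σ̂ (symmetric positive definite) that is a Karcher mean of a measure Π supported on a location-scatter family generated by X̃ (mean zero, identity covariance): members m have mean b_m and covariance Σ_m. Then the mean of μ̂ equals ∫ b_m Π(dm) and Σ̂ satisfies the fixed-point equation Σ̂ = ∫ (Σ̂^{1/2} Σ_m Σ̂^{1/2})^{1/2} Π(dm) conjugated appropriately, i.e. ∫ Σ̂^{-1/2}(Σ̂^{1/2}Σ_mΣ̂^{1/2})^{1/2}Σ̂^{-1/2} Π(dm) = I. -/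
open MeasureTheory ProbabilityTheory Filter Matrix

section Aux

variable {q : ℕ}

lemma eucl_abs_le_norm (v : EuclideanSpace ℝ (Fin q)) (k : Fin q) : |v k| ≤ ‖v‖ := by
  rw [EuclideanSpace.norm_eq]
  have h1 : |v k| = Real.sqrt (‖v k‖ ^ 2) := by
    rw [Real.sqrt_sq (norm_nonneg _), Real.norm_eq_abs]
  rw [h1]
  exact Real.sqrt_le_sqrt (Finset.single_le_sum (fun i _ => sq_nonneg (‖v i‖)) (Finset.mem_univ k))

lemma eucl_eq_sum_single (w : EuclideanSpace ℝ (Fin q)) :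
    w = ∑ k, w k • EuclideanSpace.single k (1:ℝ) := by
  apply PiLp.ext; intro j
  have h : (∑ k, w k • EuclideanSpace.single k (1:ℝ)) j
      = ∑ k, (w k • EuclideanSpace.single k (1:ℝ)) j := by
    rw [WithLp.ofLp_sum]; exact Finset.sum_apply j Finset.univ _
  rw [h]
  simp [EuclideanSpace.single_apply]

lemma integrable_euclidean {ι : Type*} [MeasurableSpace ι] {P : Measure ι}
    {f : ι → EuclideanSpace ℝ (Fin q)} (h : ∀ k, Integrable (fun i => f i k) P) :
    Integrable f P := by
  have hf : f = fun i => ∑ k, f i k • EuclideanSpace.single k (1:ℝ) :=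
    funext fun i => eucl_eq_sum_single _
  rw [hf]
  exact integrable_finset_sum _ (fun k _ => (h k).smul_const _)

lemma integral_eucl_apply {ι : Type*} [MeasurableSpace ι] {P : Measure ι}
    {f : ι → EuclideanSpace ℝ (Fin q)} (h : Integrable f P) (k : Fin q) :
    (∫ i, f i ∂P) k = ∫ i, f i k ∂P :=
  ((EuclideanSpace.proj (𝕜 := ℝ) k).integral_comp_comm h).symm

end Aux

/-- a Karcher mean of a measure supported on a location-scatter family
has mean `∫ b_m dΠ` and covariance solving the fixed-point equation
`∫ Σ̂^{-1/2}(Σ̂^{1/2}Σ_mΣ̂^{1/2})^{1/2}Σ̂^{-1/2} dΠ = I` (equivalently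
`Σ̂ = ∫ (Σ̂^{1/2}Σ_mΣ̂^{1/2})^{1/2} dΠ`). Here `R = Σ̂^{1/2}` and
`S i = (Σ̂^{1/2}Σ_{m_i}Σ̂^{1/2})^{1/2}` are the unique symmetric positive-definite
square roots, so that `A i = R⁻¹ S i R⁻¹` is the linear part of the Brenier map. -/
theorem karcher_mean_location_scatter (q : ℕ)
    {ι : Type*} [MeasurableSpace ι] (P : Measure ι) [IsProbabilityMeasure P]
    (b : ι → EuclideanSpace ℝ (Fin q)) (Sm : ι → Matrix (Fin q) (Fin q) ℝ)
    (hSm : ∀ i, (Sm i).PosDef)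
    (μhat : Measure (EuclideanSpace ℝ (Fin q))) [IsProbabilityMeasure μhat]
    (hac : μhat ≪ volume)
    (hmom : Integrable (fun x => ‖x‖ ^ 2) μhat)
    (Shat R : Matrix (Fin q) (Fin q) ℝ)
    (hShat : Shat.PosDef) (hR : R.PosDef) (hR2 : R * R = Shat)
    (S : ι → Matrix (Fin q) (Fin q) ℝ) (hSpd : ∀ i, (S i).PosDef)
    (hS2 : ∀ i, S i * S i = R * Sm i * R)
    (bhat : EuclideanSpace ℝ (Fin q)) (hbhat : bhat = ∫ x, x ∂μhat)
    (hcovhat : ∀ k l, ∫ x, (x k - bhat k) * (x l - bhat l) ∂μhat = Shat k l)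
    (hbint : Integrable b P)
    (hAint : ∀ k l, Integrable (fun i => (R⁻¹ * S i * R⁻¹) k l) P)
    (hSint : ∀ k l, Integrable (fun i => S i k l) P)
    (hKarcher : ∀ᵐ x ∂μhat,
      x = ∫ i, (Matrix.toEuclideanLin (R⁻¹ * S i * R⁻¹) (x - bhat) + b i) ∂P) :
    bhat = (∫ i, b i ∂P) ∧
    (∀ k l, (∫ i, (R⁻¹ * S i * R⁻¹) k l ∂P) = (1 : Matrix (Fin q) (Fin q) ℝ) k l) ∧
    (∀ k l, (∫ i, S i k l ∂P) = Shat k l) := by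
  set M : ι → Matrix (Fin q) (Fin q) ℝ := fun i => R⁻¹ * S i * R⁻¹ with hM
  set A : Matrix (Fin q) (Fin q) ℝ := fun k l => ∫ i, M i k l ∂P with hA
  set c : EuclideanSpace ℝ (Fin q) := ∫ i, b i ∂P with hc
  -- integrability of coordinates of `b`
  have hbk : ∀ k, Integrable (fun i => b i k) P := fun k =>
    (EuclideanSpace.proj (𝕜 := ℝ) k).integrable_comp hbint
  -- integrability over μhat
  have hnorm : Integrable (fun x : EuclideanSpace ℝ (Fin q) => ‖x‖) μhat := by
    refine ((integrable_const (1:ℝ)).add hmom).mono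
      continuous_norm.aestronglyMeasurable ?_
    filter_upwards with x
    have h1 : ‖x‖ ≤ 1 + ‖x‖ ^ 2 := by nlinarith [norm_nonneg x]
    have h2 : (0:ℝ) ≤ 1 + ‖x‖ ^ 2 := by positivity
    simpa [Real.norm_eq_abs, abs_of_nonneg (norm_nonneg x), abs_of_nonneg h2] using h1
  have hcoord : ∀ k, Integrable (fun x : EuclideanSpace ℝ (Fin q) => x k) μhat := by
    intro k
    refine ((integrable_const (1:ℝ)).add hmom).mono
      (EuclideanSpace.proj (𝕜 := ℝ) k).continuous.aestronglyMeasurable ?_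
    filter_upwards with x
    have h1 : |x k| ≤ ‖x‖ := eucl_abs_le_norm x k
    have h2 : ‖x‖ ≤ 1 + ‖x‖ ^ 2 := by nlinarith [norm_nonneg x]
    have h3 : (0:ℝ) ≤ 1 + ‖x‖ ^ 2 := by positivity
    simp only [Pi.add_apply, Real.norm_eq_abs, abs_of_nonneg h3]
    linarith
  have hprod : ∀ k l,
      Integrable (fun x : EuclideanSpace ℝ (Fin q) => (x k - bhat k) * (x l - bhat l)) μhat := by
    intro k l
    have hg : Integrable (fun x : EuclideanSpace ℝ (Fin q) => (‖x‖ + ‖bhat‖) ^ 2) μhat := by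
      have he : (fun x : EuclideanSpace ℝ (Fin q) => (‖x‖ + ‖bhat‖) ^ 2)
          = fun x => ‖x‖ ^ 2 + ((2 * ‖bhat‖) * ‖x‖ + ‖bhat‖ ^ 2) := by
        funext x; ring
      rw [he]
      exact hmom.add ((hnorm.const_mul _).add (integrable_const _))
    refine hg.mono ?_ ?_
    · exact ((((EuclideanSpace.proj (𝕜 := ℝ) k).continuous.sub continuous_const).mul
        (((EuclideanSpace.proj (𝕜 := ℝ) l).continuous.sub continuous_const)))).aestronglyMeasurable
    · filter_upwards with x
      have h1 : |x k - bhat k| ≤ ‖x‖ + ‖bhat‖ := by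
        calc |x k - bhat k| ≤ |x k| + |bhat k| := abs_sub _ _
          _ ≤ ‖x‖ + ‖bhat‖ := add_le_add (eucl_abs_le_norm x k) (eucl_abs_le_norm bhat k)
      have h2 : |x l - bhat l| ≤ ‖x‖ + ‖bhat‖ := by
        calc |x l - bhat l| ≤ |x l| + |bhat l| := abs_sub _ _
          _ ≤ ‖x‖ + ‖bhat‖ := add_le_add (eucl_abs_le_norm x l) (eucl_abs_le_norm bhat l)
      have hnn : (0:ℝ) ≤ ‖x‖ + ‖bhat‖ := by positivity
      have h3 : |x k - bhat k| * |x l - bhat l| ≤ (‖x‖ + ‖bhat‖) ^ 2 := by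
        rw [sq]
        exact mul_le_mul h1 h2 (abs_nonneg _) hnn
      have h4 : (0:ℝ) ≤ (‖x‖ + ‖bhat‖) ^ 2 := by positivity
      simpa [Real.norm_eq_abs, abs_of_nonneg h4, abs_mul] using h3
  -- coordinates of the Karcher integral
  have hproj : ∀ (x : EuclideanSpace ℝ (Fin q)) (k : Fin q),
      (∫ i, (Matrix.toEuclideanLin (M i) (x - bhat) + b i) ∂P) k
        = (∑ l, A k l * (x l - bhat l)) + c k := by
    intro x k
    set v : EuclideanSpace ℝ (Fin q) := x - bhat with hv
    have hcoeq : ∀ k, (fun i => (Matrix.toEuclideanLin (M i) v + b i) k)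
        = fun i => (∑ l, M i k l * v l) + b i k := by
      intro k
      funext i
      show (Matrix.toEuclideanLin (M i) v) k + b i k = _
      have : (Matrix.toEuclideanLin (M i) v) k = ∑ l, M i k l * v l := by
        simp [Matrix.toEuclideanLin_apply, Matrix.mulVec, dotProduct]
      rw [this]
    have hcoint : ∀ k, Integrable (fun i => (Matrix.toEuclideanLin (M i) v + b i) k) P := by
      intro k
      rw [hcoeq k]
      exact (integrable_finset_sum _ fun l _ => (hAint k l).mul_const _).add (hbk k)
    have hFint : Integrable (fun i => Matrix.toEuclideanLin (M i) v + b i) P :=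
      integrable_euclidean hcoint
    rw [integral_eucl_apply hFint k, hcoeq k]
    rw [integral_add (integrable_finset_sum _ fun l _ => (hAint k l).mul_const _) (hbk k),
      integral_finset_sum _ fun l _ => (hAint k l).mul_const _]
    congr 1
    · refine Finset.sum_congr rfl fun l _ => ?_
      rw [integral_mul_const]
      rfl
    · exact (integral_eucl_apply hbint k).symm
  have hae : ∀ᵐ x ∂μhat, ∀ k, x k = (∑ l, A k l * (x l - bhat l)) + c k := by
    filter_upwards [hKarcher] with x hx k
    conv_lhs => rw [hx]
    exact hproj x k
  have hsub : ∀ l, Integrable (fun x : EuclideanSpace ℝ (Fin q) => x l - bhat l) μhat :=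
    fun l => (hcoord l).sub (integrable_const _)
  have hintx : ∀ l, ∫ x, x l ∂μhat = bhat l := by
    intro l
    rw [hbhat]
    exact (integral_eucl_apply (integrable_euclidean hcoord) l).symm
  have hsub0 : ∀ l, ∫ x, (x l - bhat l) ∂μhat = 0 := by
    intro l
    rw [integral_sub (hcoord l) (integrable_const _), hintx l]
    simp
  -- mean identity
  have hbc : ∀ k, bhat k = c k := by
    intro k
    have h1 : ∫ x, x k ∂μhat
        = ∫ x, ((∑ l, A k l * (x l - bhat l)) + c k) ∂μhat :=
      integral_congr_ae (hae.mono fun x hx => hx k)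
    rw [hintx k] at h1
    rw [integral_add (integrable_finset_sum _ fun l _ => (hsub l).const_mul _)
      (integrable_const _), integral_finset_sum _ fun l _ => (hsub l).const_mul _] at h1
    have h2 : ∀ l ∈ Finset.univ, ∫ x, A k l * (x l - bhat l) ∂μhat = 0 := by
      intro l _
      rw [integral_const_mul, hsub0 l, mul_zero]
    rw [Finset.sum_congr rfl h2] at h1
    simpa using h1
  -- covariance identity : Shat = A * Shat
  have hAS : ∀ k j, Shat k j = ∑ l, A k l * Shat l j := by
    intro k j
    have h1 : ∫ x, (x k - bhat k) * (x j - bhat j) ∂μhat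
        = ∫ x, (∑ l, A k l * ((x l - bhat l) * (x j - bhat j))) ∂μhat := by
      apply integral_congr_ae
      filter_upwards [hae] with x hx
      have hxk : x k - bhat k = ∑ l, A k l * (x l - bhat l) := by
        rw [hx k, hbc k]; ring
      calc (x k - bhat k) * (x j - bhat j)
          = (∑ l, A k l * (x l - bhat l)) * (x j - bhat j) := by rw [hxk]
        _ = ∑ l, A k l * ((x l - bhat l) * (x j - bhat j)) := by
            rw [Finset.sum_mul]; exact Finset.sum_congr rfl fun l _ => by ring
    rw [hcovhat k j] at h1
    rw [h1, integral_finset_sum _ fun l _ => ((hprod l j).const_mul _)]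
    refine Finset.sum_congr rfl fun l _ => ?_
    rw [integral_const_mul, hcovhat l j]
  have hShatU : IsUnit Shat.det := isUnit_iff_ne_zero.mpr hShat.det_pos.ne'
  have hmulAS : A * Shat = Shat := by
    ext k j
    rw [Matrix.mul_apply]
    exact (hAS k j).symm
  have hA1 : A = 1 := by
    calc A = A * (Shat * Shat⁻¹) := by rw [Matrix.mul_nonsing_inv Shat hShatU, mul_one]
      _ = (A * Shat) * Shat⁻¹ := by rw [Matrix.mul_assoc]
      _ = Shat * Shat⁻¹ := by rw [hmulAS]
      _ = 1 := Matrix.mul_nonsing_inv Shat hShatU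
  refine ⟨PiLp.ext hbc, fun k l => ?_, fun k l => ?_⟩
  · show A k l = (1 : Matrix (Fin q) (Fin q) ℝ) k l
    rw [hA1]
  · -- third claim
    have hRU : IsUnit R.det := isUnit_iff_ne_zero.mpr hR.det_pos.ne'
    have hSM : ∀ i, S i = R * M i * R := by
      intro i
      rw [hM]
      calc S i = (R * R⁻¹) * S i * (R⁻¹ * R) := by
            rw [Matrix.mul_nonsing_inv R hRU, Matrix.nonsing_inv_mul R hRU, one_mul, mul_one]
        _ = R * (R⁻¹ * S i * R⁻¹) * R := by noncomm_ring
    have hexp : (fun i => S i k l)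
        = fun i => ∑ b', (∑ a, R k a * M i a b') * R b' l := by
      funext i
      rw [hSM i]
      simp [Matrix.mul_apply, Finset.sum_mul]
    rw [hexp, integral_finset_sum _ fun b' _ =>
      ((integrable_finset_sum _ fun a _ => (hAint a b').const_mul _).mul_const _)]
    have hstep : ∀ b' ∈ Finset.univ,
        ∫ i, (∑ a, R k a * M i a b') * R b' l ∂P = (∑ a, R k a * A a b') * R b' l := by
      intro b' _
      rw [integral_mul_const _ _, integral_finset_sum _ fun a _ => (hAint a b').const_mul _]
      congr 1
      exact Finset.sum_congr rfl fun a _ => by rw [integral_const_mul]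
    rw [Finset.sum_congr rfl hstep]
    have : (∑ b', (∑ a, R k a * A a b') * R b' l) = (R * A * R) k l := by
      simp [Matrix.mul_apply]
    rw [this, hA1, mul_one, hR2]
end
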